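/- arXiv:1912.12490 — 9 statements merged into one kernel-verified Lean document; each statement's English description precedes it below -/
import Mathlib

section
/- Let (X, τ_X) be a spectral space and X_d ⊆ X. Then X_d is dense in the patch topology of X if and only if X_d is decent, i.e. for all compact open sets U, V of X, U ≠ V implies U ∩ X_d ≠ V ∩ X_d. -/
open Set TopologicalSpace Topology

/-- The family of compact open subsets of a topological space. -/
def CO (X : Type*) [TopologicalSpace X] : Set (Set X) := {U | IsCompact U ∧ IsOpen U}

/-- A spectral space: compact, T0, sober, the compact open sets form a basis and are
closed under binary intersections. -/
def IsSpectralTopSpace (X : Type*) [TopologicalSpace X] : Prop :=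
  CompactSpace X ∧ T0Space X ∧ QuasiSober X ∧
    TopologicalSpace.IsTopologicalBasis (CO X) ∧
    ∀ U ∈ CO X, ∀ V ∈ CO X, U ∩ V ∈ CO X

/-- The patch (constructible) topology: generated by the sets `U \ V` for `U, V`
compact open. -/
def patchTop (X : Type*) [TopologicalSpace X] : TopologicalSpace X :=
  TopologicalSpace.generateFrom {S | ∃ U ∈ CO X, ∃ V ∈ CO X, S = U \ V}

/-- In a spectral space, a subset `Xd` is dense in the patch topology
if and only if it is decent (distinct compact open sets have distinct traces on `Xd`). -/
theorem patchDense_iff_decent {X : Type*} [TopologicalSpace X]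
    (hX : IsSpectralTopSpace X) (Xd : Set X) :
    @Dense X (patchTop X) Xd ↔
      ∀ U ∈ CO X, ∀ V ∈ CO X, U ≠ V → U ∩ Xd ≠ V ∩ Xd := by
  obtain ⟨hcomp, _, _, _, hinter⟩ := hX
  set B : Set (Set X) := {S | ∃ U ∈ CO X, ∃ V ∈ CO X, S = U \ V} with hB
  have hXCO : (univ : Set X) ∈ CO X := ⟨isCompact_univ, isOpen_univ⟩
  have hbasis : @TopologicalSpace.IsTopologicalBasis X (patchTop X) B := by
    refine @TopologicalSpace.IsTopologicalBasis.mk X (patchTop X) B ?_ ?_ rfl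
    · rintro t₁ ⟨U₁, hU₁, V₁, hV₁, rfl⟩ t₂ ⟨U₂, hU₂, V₂, hV₂, rfl⟩ x hx
      refine ⟨(U₁ ∩ U₂) \ (V₁ ∪ V₂), ⟨U₁ ∩ U₂, hinter _ hU₁ _ hU₂, V₁ ∪ V₂,
        ⟨hV₁.1.union hV₂.1, hV₁.2.union hV₂.2⟩, rfl⟩, ?_, ?_⟩
      · exact ⟨⟨hx.1.1, hx.2.1⟩, fun h => h.elim hx.1.2 hx.2.2⟩
      · rintro y ⟨⟨hy1, hy2⟩, hy3⟩
        exact ⟨⟨hy1, fun h => hy3 (Or.inl h)⟩, ⟨hy2, fun h => hy3 (Or.inr h)⟩⟩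
    · apply eq_univ_of_univ_subset
      intro x _
      exact ⟨univ \ ∅, ⟨univ, hXCO, ∅, ⟨isCompact_empty, isOpen_empty⟩, rfl⟩, by simp⟩
  rw [@TopologicalSpace.IsTopologicalBasis.dense_iff X (patchTop X) B hbasis Xd]
  constructor
  · rintro h U hU V hV hUV heq
    rcases (Set.symmDiff_nonempty.mpr hUV) with ⟨x, hx⟩
    rcases hx with ⟨hxU, hxV⟩ | ⟨hxV, hxU⟩
    · obtain ⟨y, ⟨hyU, hyV⟩, hyXd⟩ := h (U \ V) ⟨U, hU, V, hV, rfl⟩ ⟨x, hxU, hxV⟩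
      exact hyV (show y ∈ V ∩ Xd from heq ▸ (⟨hyU, hyXd⟩ : y ∈ U ∩ Xd)).1
    · obtain ⟨y, ⟨hyV, hyU⟩, hyXd⟩ := h (V \ U) ⟨V, hV, U, hU, rfl⟩ ⟨x, hxV, hxU⟩
      exact hyU (show y ∈ U ∩ Xd from heq.symm ▸ (⟨hyV, hyXd⟩ : y ∈ V ∩ Xd)).1
  · rintro h S ⟨U, hU, V, hV, rfl⟩ ⟨x, hxU, hxV⟩
    have hne : U ≠ U ∩ V := fun he => hxV (he ▸ hxU : x ∈ U ∩ V).2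
    have := h U hU (U ∩ V) (hinter _ hU _ hV) hne
    have hd : ∃ y, y ∈ U ∩ Xd ∧ y ∉ (U ∩ V) ∩ Xd := by
      by_contra hc
      push_neg at hc
      exact this (Subset.antisymm hc (fun y hy => ⟨hy.1.1, hy.2⟩))
    obtain ⟨y, ⟨hyU, hyXd⟩, hy⟩ := hd
    exact ⟨y, ⟨hyU, fun hyV => hy ⟨⟨hyU, hyV⟩, hyXd⟩⟩, hyXd⟩
end

section
/- A topological space (X, τ_X) admits a spectralification if and only if it is T0. That is: (X, τ_X) is T0 if and only if there exist a spectral space (Y, τ_Y) and a topological embedding e : X → Y such that e(X) is dense in the patch topology of Y. -/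
open Set TopologicalSpace Topology

namespace Spectralification

universe u
variable {I : Type u}

def sub (i : I) : Set (I → Prop) := {f | f i}

def basicOf (A : Finset I) : Set (I → Prop) := {f | ∀ i ∈ A, f i}

def finOpenOf (𝒜 : Finset (Finset I)) : Set (I → Prop) := ⋃ A ∈ 𝒜, basicOf A

theorem topology_eq :
    (Pi.topologicalSpace : TopologicalSpace (I → Prop)) = generateFrom (range (sub (I := I))) := by
  have : (Pi.topologicalSpace : TopologicalSpace (I → Prop))
      = ⨅ i, TopologicalSpace.induced (fun f => f i) sierpinskiSpace := rfl
  rw [this]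
  have h1 : ∀ i : I, TopologicalSpace.induced (fun f : I → Prop => f i) sierpinskiSpace
      = generateFrom {sub i} := by
    intro i
    rw [show (sierpinskiSpace : TopologicalSpace Prop) = generateFrom {{True}} from rfl,
      induced_generateFrom_eq]
    congr 1
    rw [image_singleton]
    congr 1
    ext f
    simp [sub, eq_iff_iff]
  simp_rw [h1]
  rw [← generateFrom_iUnion]
  congr 1
  ext T
  simp [range]

theorem isOpen_sub (i : I) : IsOpen (sub i) := by
  rw [topology_eq]
  exact .basic _ ⟨i, rfl⟩

theorem isOpen_upper {U : Set (I → Prop)} (hU : IsOpen U) {f g : I → Prop}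
    (hf : f ∈ U) (hfg : ∀ i, f i → g i) : g ∈ U := by
  rw [topology_eq] at hU
  induction hU with
  | basic s hs => obtain ⟨i, rfl⟩ := hs; exact hfg i hf
  | univ => trivial
  | inter s t _ _ ihs iht => exact ⟨ihs hf.1, iht hf.2⟩
  | sUnion S _ ih =>
    obtain ⟨s, hsS, hfs⟩ := hf
    exact ⟨s, hsS, ih s hsS hfs⟩

end Spectralification

namespace Spectralification
universe v
variable {I : Type v}

theorem basicOf_eq (A : Finset I) : basicOf A = ⋂ i ∈ A, sub i := by
  ext f; simp [basicOf, sub]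

theorem isOpen_basicOf (A : Finset I) : IsOpen (basicOf A) := by
  rw [basicOf_eq]; exact isOpen_biInter_finset fun i _ => isOpen_sub i

theorem isCompact_of_min {K : Set (I → Prop)} {g : I → Prop} (hg : g ∈ K)
    (hmin : ∀ f ∈ K, ∀ i, g i → f i) : IsCompact K := by
  apply isCompact_of_finite_subcover
  intro ι U hU hcov
  obtain ⟨j, hj⟩ := mem_iUnion.1 (hcov hg)
  exact ⟨{j}, fun f hf => mem_iUnion₂.2
    ⟨j, Finset.mem_singleton_self j, isOpen_upper (hU j) hj (hmin f hf)⟩⟩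

theorem basicOf_mem_CO (A : Finset I) : basicOf A ∈ CO (I → Prop) := by
  refine ⟨isCompact_of_min (g := fun i => (i ∈ A : Prop)) (fun i hi => hi) ?_, isOpen_basicOf A⟩
  intro f hf i hi; exact hf i hi

theorem finOpenOf_mem_CO (𝒜 : Finset (Finset I)) : finOpenOf 𝒜 ∈ CO (I → Prop) :=
  ⟨𝒜.isCompact_biUnion fun A _ => (basicOf_mem_CO A).1,
    isOpen_biUnion fun A _ => isOpen_basicOf A⟩

theorem sub_injective : Function.Injective (sub (I := I)) := by
  intro i j h
  have : (fun k => k = i) ∈ sub i := rfl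
  rw [h] at this
  exact this.symm

theorem isBasis_basic :
    IsTopologicalBasis {T : Set (I → Prop) | ∃ A : Finset I, T = basicOf A} := by
  convert isTopologicalBasis_of_subbasis (topology_eq (I := I)) using 1
  ext T
  constructor
  · rintro ⟨A, rfl⟩
    refine ⟨sub '' ↑A, ⟨(A.finite_toSet).image _, image_subset_range _ _⟩, ?_⟩
    ext f; simp [basicOf, sub]
  · rintro ⟨F, ⟨hfin, hsub⟩, rfl⟩
    have hpre : (sub ⁻¹' F : Set I).Finite :=
      hfin.preimage (sub_injective.injOn)
    refine ⟨hpre.toFinset, ?_⟩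
    ext f
    simp only [mem_sInter, basicOf, Finite.mem_toFinset, mem_setOf_eq]
    constructor
    · intro h i hi
      exact h (sub i) hi
    · intro h T hT
      obtain ⟨i, rfl⟩ := hsub hT
      exact h i hT

theorem CO_eq : CO (I → Prop) = {T | ∃ 𝒜 : Finset (Finset I), T = finOpenOf 𝒜} := by
  classical
  ext T
  constructor
  · rintro ⟨hc, ho⟩
    have hcov : T ⊆ ⋃ A : {A : Finset I // basicOf A ⊆ T}, basicOf A.1 := by
      intro f hf
      obtain ⟨b, ⟨A, rfl⟩, hfb, hbT⟩ := isBasis_basic.exists_subset_of_mem_open hf ho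
      exact mem_iUnion.2 ⟨⟨A, hbT⟩, hfb⟩
    obtain ⟨t, ht⟩ := hc.elim_finite_subcover (fun A : {A : Finset I // basicOf A ⊆ T} => basicOf A.1) (fun A => isOpen_basicOf A.1) hcov
    refine ⟨t.image Subtype.val, subset_antisymm ?_ ?_⟩
    · intro f hf
      obtain ⟨A, hA, hfA⟩ := mem_iUnion₂.1 (ht hf)
      exact mem_iUnion₂.2 ⟨A.1, Finset.mem_image_of_mem _ hA, hfA⟩
    · intro f hf
      obtain ⟨A, hA, hfA⟩ := mem_iUnion₂.1 hf
      obtain ⟨B, _, rfl⟩ := Finset.mem_image.1 hA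
      exact B.2 hfA
  · rintro ⟨𝒜, rfl⟩
    exact finOpenOf_mem_CO 𝒜

theorem isBasis_CO : IsTopologicalBasis (CO (I → Prop)) := by
  refine isTopologicalBasis_of_isOpen_of_nhds (fun u hu => hu.2) ?_
  intro a u hau hu
  obtain ⟨b, ⟨A, rfl⟩, hab, hbu⟩ := isBasis_basic.exists_subset_of_mem_open hau hu
  exact ⟨basicOf A, basicOf_mem_CO A, hab, hbu⟩

theorem CO_inter {U V : Set (I → Prop)} (hU : U ∈ CO (I → Prop)) (hV : V ∈ CO (I → Prop)) :
    U ∩ V ∈ CO (I → Prop) := by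
  rw [CO_eq] at hU hV ⊢
  obtain ⟨𝒜, rfl⟩ := hU
  obtain ⟨ℬ, rfl⟩ := hV
  classical
  refine ⟨Finset.image₂ (· ∪ ·) 𝒜 ℬ, ?_⟩
  ext f
  simp only [finOpenOf, mem_inter_iff, mem_iUnion, basicOf, mem_setOf_eq, exists_prop,
    Finset.mem_image₂]
  constructor
  · rintro ⟨⟨A, hA, hfA⟩, ⟨B, hB, hfB⟩⟩
    refine ⟨A ∪ B, ⟨A, hA, B, hB, rfl⟩, ?_⟩
    intro i hi
    rcases Finset.mem_union.1 hi with h | h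
    · exact hfA i h
    · exact hfB i h
  · rintro ⟨C, ⟨A, hA, B, hB, rfl⟩, hfC⟩
    exact ⟨⟨A, hA, fun i hi => hfC i (Finset.mem_union_left _ hi)⟩,
      ⟨B, hB, fun i hi => hfC i (Finset.mem_union_right _ hi)⟩⟩

example : T0Space (I → Prop) := inferInstance

end Spectralification

namespace Spectralification
universe w
variable {I : Type w}

def td (I : Type w) : TopologicalSpace (I → Prop) :=
  @Pi.topologicalSpace I (fun _ => Prop) (fun _ => ⊥)

def patchGen (I : Type w) : Set (Set (I → Prop)) :=
  {S | ∃ U ∈ CO (I → Prop), ∃ V ∈ CO (I → Prop), S = U \ V}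

theorem patchTop_eq_generateFrom : patchTop (I → Prop) = generateFrom (patchGen I) := rfl

theorem td_compact : @CompactSpace (I → Prop) (td I) := by
  unfold td
  letI : TopologicalSpace Prop := ⊥
  haveI : DiscreteTopology Prop := ⟨rfl⟩
  haveI : CompactSpace Prop := Finite.compactSpace
  exact Pi.compactSpace

theorem td_clopen_finOpenOf (𝒜 : Finset (Finset I)) :
    IsOpen[td I] (finOpenOf 𝒜) ∧ IsClosed[td I] (finOpenOf 𝒜) := by
  letI : TopologicalSpace Prop := ⊥
  haveI : DiscreteTopology Prop := ⟨rfl⟩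
  letI tp : TopologicalSpace (I → Prop) := td I
  have hsub : ∀ i : I, IsOpen[tp] (sub i) ∧ IsClosed[tp] (sub i) := by
    intro i
    have hc : Continuous (fun f : I → Prop => f i) := continuous_apply i
    have h1 : sub i = (fun f : I → Prop => f i) ⁻¹' {p : Prop | p} := rfl
    rw [h1]
    exact ⟨(isOpen_discrete _).preimage hc, (isClosed_discrete _).preimage hc⟩
  have hbasic : ∀ A : Finset I, IsOpen[tp] (basicOf A) ∧ IsClosed[tp] (basicOf A) := by
    intro A
    rw [basicOf_eq]
    exact ⟨isOpen_biInter_finset fun i _ => (hsub i).1,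
      isClosed_biInter fun i _ => (hsub i).2⟩
  exact ⟨isOpen_biUnion fun A _ => (hbasic A).1,
    (𝒜.finite_toSet).isClosed_biUnion fun A _ => (hbasic A).2⟩

theorem td_le_patchTop : td I ≤ patchTop (I → Prop) := by
  apply le_generateFrom
  rintro s ⟨U, hU, V, hV, rfl⟩
  rw [CO_eq] at hU hV
  obtain ⟨𝒜, rfl⟩ := hU
  obtain ⟨ℬ, rfl⟩ := hV
  letI tp : TopologicalSpace (I → Prop) := td I
  rw [diff_eq]
  exact (td_clopen_finOpenOf 𝒜).1.inter (td_clopen_finOpenOf ℬ).2.isOpen_compl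

theorem patch_compact_univ : @IsCompact (I → Prop) (patchTop (I → Prop)) univ := by
  have h : @IsCompact _ (td I) univ := @isCompact_univ _ (td I) td_compact
  have hcont : Continuous[td I, patchTop (I → Prop)] id := continuous_id_of_le td_le_patchTop
  have := @IsCompact.image _ _ (td I) (patchTop (I → Prop)) _ _ h hcont
  simpa using this

theorem patch_compactSpace : @CompactSpace (I → Prop) (patchTop (I → Prop)) :=
  @CompactSpace.mk (I → Prop) (patchTop (I → Prop)) patch_compact_univ

theorem sub_eq_basicOf (i : I) : sub i = basicOf {i} := by
  ext f; simp [sub, basicOf]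

theorem empty_mem_CO : (∅ : Set (I → Prop)) ∈ CO (I → Prop) := ⟨isCompact_empty, isOpen_empty⟩

theorem univ_mem_CO : (univ : Set (I → Prop)) ∈ CO (I → Prop) := by
  refine ⟨isCompact_of_min (g := fun _ => False) (mem_univ _) ?_, isOpen_univ⟩
  intro f _ i hi
  exact hi.elim

theorem patch_le_tY : patchTop (I → Prop) ≤ Pi.topologicalSpace := by
  conv_rhs => rw [topology_eq]
  apply le_generateFrom
  rintro s ⟨i, rfl⟩
  exact TopologicalSpace.GenerateOpen.basic _
    ⟨sub i, sub_eq_basicOf i ▸ basicOf_mem_CO {i}, ∅, empty_mem_CO, (diff_empty).symm⟩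

theorem patch_isOpen_mem_CO {U : Set (I → Prop)} (hU : U ∈ CO (I → Prop)) :
    IsOpen[patchTop (I → Prop)] U :=
  TopologicalSpace.GenerateOpen.basic _ ⟨U, hU, ∅, empty_mem_CO, (diff_empty).symm⟩

theorem patch_isClosed_mem_CO {U : Set (I → Prop)} (hU : U ∈ CO (I → Prop)) :
    IsClosed[patchTop (I → Prop)] U := by
  letI tp : TopologicalSpace (I → Prop) := patchTop (I → Prop)
  rw [CO_eq] at hU
  obtain ⟨𝒜, rfl⟩ := hU
  rw [← isOpen_compl_iff]
  have : (finOpenOf 𝒜)ᶜ = ⋂ A ∈ 𝒜, (univ \ basicOf A) := by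
    ext f
    simp [finOpenOf]
  rw [this]
  exact isOpen_biInter_finset fun A _ =>
    TopologicalSpace.GenerateOpen.basic _ ⟨univ, univ_mem_CO, basicOf A, basicOf_mem_CO A, rfl⟩

end Spectralification

namespace Spectralification
universe w2
variable {I : Type w2}

theorem isCompact_of_patch {K : Set (I → Prop)} (h : @IsCompact _ (patchTop (I → Prop)) K) :
    IsCompact K := by
  have hcont : Continuous[patchTop (I → Prop), Pi.topologicalSpace] id :=
    continuous_id_of_le patch_le_tY
  have := @IsCompact.image _ _ (patchTop (I → Prop)) Pi.topologicalSpace _ _ h hcont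
  simpa using this

theorem patch_isClosed_of_isClosed {F : Set (I → Prop)} (hF : IsClosed F) :
    IsClosed[patchTop (I → Prop)] F := by
  letI := patchTop (I → Prop)
  rw [← isOpen_compl_iff]
  exact hF.isOpen_compl.mono patch_le_tY

variable {Z : Set (I → Prop)}

theorem CO_subtype (hZ : IsClosed[patchTop (I → Prop)] Z) :
    CO (↥Z) = (preimage (Subtype.val : Z → (I → Prop))) '' CO (I → Prop) := by
  classical
  ext K
  constructor
  · rintro ⟨hc, ho⟩
    obtain ⟨W, hW, hKW⟩ := isOpen_induced_iff.1 ho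
    have hDW : (Subtype.val : Z → (I → Prop)) '' K ⊆ W := by
      rintro _ ⟨x, hx, rfl⟩
      rw [← hKW] at hx; exact hx
    have hDc : IsCompact ((Subtype.val : Z → (I → Prop)) '' K) := Subtype.isCompact_iff.1 hc
    have hcov : ((Subtype.val : Z → (I → Prop)) '' K : Set (I → Prop)) ⊆
        ⋃ A : {A : Finset I // basicOf A ⊆ W}, basicOf A.1 := by
      intro f hf
      obtain ⟨b, ⟨A, rfl⟩, hfb, hbW⟩ := isBasis_basic.exists_subset_of_mem_open (hDW hf) hW
      exact mem_iUnion.2 ⟨⟨A, hbW⟩, hfb⟩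
    obtain ⟨t, ht⟩ := hDc.elim_finite_subcover
      (fun A : {A : Finset I // basicOf A ⊆ W} => basicOf A.1)
      (fun A => isOpen_basicOf A.1) hcov
    refine ⟨finOpenOf (t.image Subtype.val), finOpenOf_mem_CO _, subset_antisymm ?_ ?_⟩
    · intro x hx
      obtain ⟨A, hA, hxA⟩ := mem_iUnion₂.1 hx
      obtain ⟨B, _, rfl⟩ := Finset.mem_image.1 hA
      rw [← hKW]
      exact B.2 hxA
    · intro x hx
      obtain ⟨A, hA, hxA⟩ := mem_iUnion₂.1 (ht ⟨x, hx, rfl⟩)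
      exact mem_iUnion₂.2 ⟨A.1, Finset.mem_image_of_mem _ hA, hxA⟩
  · rintro ⟨U, hU, rfl⟩
    refine ⟨?_, hU.2.preimage continuous_subtype_val⟩
    rw [Subtype.isCompact_iff]
    have himg : (Subtype.val : Z → (I → Prop)) '' (Subtype.val ⁻¹' U) = U ∩ Z := by
      rw [image_preimage_eq_inter_range, Subtype.range_coe]
    rw [himg]
    apply isCompact_of_patch
    letI := patchTop (I → Prop)
    haveI := patch_compactSpace (I := I)
    exact ((patch_isClosed_mem_CO hU).inter hZ).isCompact

theorem compactSpace_subtype (hZ : IsClosed[patchTop (I → Prop)] Z) : CompactSpace ↥Z := by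
  rw [← isCompact_iff_compactSpace]
  apply isCompact_of_patch
  letI := patchTop (I → Prop)
  haveI := patch_compactSpace (I := I)
  exact hZ.isCompact

theorem isBasis_CO_subtype (hZ : IsClosed[patchTop (I → Prop)] Z) :
    IsTopologicalBasis (CO ↥Z) := by
  rw [CO_subtype hZ]
  exact isBasis_CO.isInducing IsInducing.subtypeVal

theorem CO_inter_subtype (hZ : IsClosed[patchTop (I → Prop)] Z) {U V : Set ↥Z}
    (hU : U ∈ CO ↥Z) (hV : V ∈ CO ↥Z) : U ∩ V ∈ CO ↥Z := by
  rw [CO_subtype hZ] at hU hV ⊢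
  obtain ⟨U', hU', rfl⟩ := hU
  obtain ⟨V', hV', rfl⟩ := hV
  exact ⟨U' ∩ V', CO_inter hU' hV', rfl⟩

theorem patchTop_subtype (hZ : IsClosed[patchTop (I → Prop)] Z) :
    patchTop ↥Z = TopologicalSpace.induced (Subtype.val : Z → (I → Prop)) (patchTop (I → Prop)) := by
  rw [patchTop, patchTop, induced_generateFrom_eq]
  congr 1
  ext T
  constructor
  · rintro ⟨U, hU, V, hV, rfl⟩
    rw [CO_subtype hZ] at hU hV
    obtain ⟨U', hU', rfl⟩ := hU
    obtain ⟨V', hV', rfl⟩ := hV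
    exact ⟨U' \ V', ⟨U', hU', V', hV', rfl⟩, (preimage_diff _ _ _).symm⟩
  · rintro ⟨s, ⟨U', hU', V', hV', rfl⟩, rfl⟩
    refine ⟨Subtype.val ⁻¹' U', ?_, Subtype.val ⁻¹' V', ?_, preimage_diff _ _ _⟩
    · rw [CO_subtype hZ]; exact ⟨U', hU', rfl⟩
    · rw [CO_subtype hZ]; exact ⟨V', hV', rfl⟩

end Spectralification

namespace Spectralification
universe w3
variable {I : Type w3}

theorem irr_finset_inter {D : Set (I → Prop)} (hD : IsIrreducible D) (A : Finset I)
    (h : ∀ i ∈ A, (D ∩ sub i).Nonempty) : (D ∩ basicOf A).Nonempty := by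
  classical
  induction A using Finset.induction_on with
  | empty =>
    have : basicOf (∅ : Finset I) = univ := by ext f; simp [basicOf]
    rw [this, inter_univ]
    exact hD.nonempty
  | @insert i A hiA ih =>
    have h1 := h i (Finset.mem_insert_self i A)
    have h2 := ih fun j hj => h j (Finset.mem_insert_of_mem hj)
    have h3 := hD.2 (sub i) (basicOf A) (isOpen_sub i) (isOpen_basicOf A) h1 h2
    have : basicOf (insert i A) = sub i ∩ basicOf A := by
      ext f; simp [basicOf, sub]
    rw [this]
    exact h3

theorem exists_basic_constraint {g : I → Prop} {F₀ : Set (Set (I → Prop))} (hfin : F₀.Finite)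
    (hsub : F₀ ⊆ patchGen I)
    (hg : ∀ s ∈ F₀, g ∈ s) :
    ∃ A : Finset I, (∀ i ∈ A, g i) ∧
      ∀ f : I → Prop, f ∈ basicOf A → (∀ i, f i → g i) → f ∈ ⋂₀ F₀ := by
  classical
  refine Set.Finite.induction_on
    (motive := fun F₀ _ => F₀ ⊆ patchGen I → (∀ s ∈ F₀, g ∈ s) →
      ∃ A : Finset I, (∀ i ∈ A, g i) ∧
        ∀ f : I → Prop, f ∈ basicOf A → (∀ i, f i → g i) → f ∈ ⋂₀ F₀)
    F₀ hfin ?_ ?_ hsub hg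
  · exact fun _ _ => ⟨∅, fun i hi => absurd hi (Finset.notMem_empty i), fun f _ _ => by simp⟩
  · rintro s₀ F₀ hs₀ hfin ih hsub' hg'
    obtain ⟨U, hU, V, hV, rfl⟩ := hsub' (mem_insert s₀ F₀)
    have hgUV : g ∈ U \ V := hg' _ (mem_insert _ _)
    obtain ⟨b, ⟨A₀, rfl⟩, hgb, hbU⟩ := isBasis_basic.exists_subset_of_mem_open hgUV.1 hU.2
    obtain ⟨A₁, hA₁g, hA₁⟩ := ih (fun s hs => hsub' (mem_insert_of_mem _ hs))
      (fun s hs => hg' s (mem_insert_of_mem _ hs))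
    refine ⟨A₀ ∪ A₁, ?_, ?_⟩
    · intro i hi
      rcases Finset.mem_union.1 hi with h | h
      · exact hgb i h
      · exact hA₁g i h
    · intro f hf hfg
      rw [sInter_insert]
      constructor
      · refine ⟨hbU fun i hi => hf i (Finset.mem_union_left _ hi), fun hfV => ?_⟩
        exact hgUV.2 (isOpen_upper hV.2 hfV hfg)
      · exact hA₁ f (fun i hi => hf i (Finset.mem_union_right _ hi)) hfg

variable {Z : Set (I → Prop)}

theorem patch_dense_subtype (hZ : IsClosed[patchTop (I → Prop)] Z) {s : Set (I → Prop)}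
    (hs : s ⊆ Z) (hZc : @closure _ (patchTop (I → Prop)) s = Z) :
    @Dense ↥Z (patchTop ↥Z) (Subtype.val ⁻¹' s) := by
  rw [@dense_iff_inter_open ↥Z (patchTop ↥Z)]
  rintro U hU ⟨y, hyU⟩
  rw [patchTop_subtype hZ] at hU
  obtain ⟨W, hW, rfl⟩ := hU
  have hyW : (y : I → Prop) ∈ W := hyU
  have hyZ : (y : I → Prop) ∈ @closure _ (patchTop (I → Prop)) s := by
    rw [hZc]; exact y.2
  obtain ⟨f, hfW, hfs⟩ : (W ∩ s).Nonempty := by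
    letI := patchTop (I → Prop)
    exact mem_closure_iff.1 hyZ W hW hyW
  exact ⟨⟨f, hs hfs⟩, hfW, hfs⟩


theorem quasiSober_subtype (hZ : IsClosed[patchTop (I → Prop)] Z) : QuasiSober ↥Z := by
  constructor
  intro S hirr hcl
  have hDirr : IsIrreducible ((Subtype.val : Z → (I → Prop)) '' S) :=
    hirr.image _ continuous_subtype_val.continuousOn
  set D := (Subtype.val : Z → (I → Prop)) '' S with hD
  obtain ⟨F, hF, hFS⟩ := isClosed_induced_iff.1 hcl
  have hDF : D = F ∩ Z := by
    rw [hD, ← hFS, image_preimage_eq_inter_range, Subtype.range_coe]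
  have hDpc : IsClosed[patchTop (I → Prop)] D := by
    rw [hDF]
    letI := patchTop (I → Prop)
    exact (patch_isClosed_of_isClosed hF).inter hZ
  set g : I → Prop := fun i => ∃ f ∈ D, f i with hgdef
  have hle : ∀ f ∈ D, ∀ i, f i → g i := fun f hf i hfi => ⟨f, hf, hfi⟩
  have hgD : g ∈ D := by
    by_contra hgD
    letI tp : TopologicalSpace (I → Prop) := patchTop (I → Prop)
    have hopen : IsOpen[tp] Dᶜ := hDpc.isOpen_compl
    have hbasis := @isTopologicalBasis_of_subbasis (I → Prop) tp (patchGen I) rfl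
    obtain ⟨b, ⟨F₀, ⟨hfin, hsubG⟩, rfl⟩, hgb, hbD⟩ :=
      hbasis.exists_subset_of_mem_open hgD hopen
    have hgall : ∀ s ∈ F₀, g ∈ s := fun s hs => (mem_sInter.1 hgb) s hs
    obtain ⟨A, hAg, hAprop⟩ := exists_basic_constraint hfin hsubG hgall
    have hne : ∀ i ∈ A, (D ∩ sub i).Nonempty := by
      intro i hi
      obtain ⟨f, hf, hfi⟩ := hAg i hi
      exact ⟨f, hf, hfi⟩
    obtain ⟨f, hfD, hfA⟩ := irr_finset_inter hDirr A hne
    exact (hbD (hAprop f hfA (hle f hfD))) hfD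
  obtain ⟨y, hyS, hyval⟩ := hgD
  refine ⟨y, ?_⟩
  rw [isGenericPoint_def]
  apply subset_antisymm
  · exact closure_minimal (singleton_subset_iff.2 hyS) hcl
  · intro z hz
    rw [mem_closure_iff]
    intro O hO hzO
    obtain ⟨W, hW, hOW⟩ := isOpen_induced_iff.1 hO
    refine ⟨y, ?_, mem_singleton y⟩
    rw [← hOW] at hzO ⊢
    have hzW : (z : I → Prop) ∈ W := hzO
    have : g ∈ W := isOpen_upper hW hzW (hle _ ⟨z, hz, rfl⟩)
    show (y : I → Prop) ∈ W
    rw [hyval]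
    exact this

end Spectralification

open Spectralification

/-- A topological space admits a spectralification (a topological embedding
into a spectral space with patch dense image) if and only if it is T0. -/
theorem t0_iff_spectralification {X : Type u} [TopologicalSpace X] :
    T0Space X ↔
      ∃ (Y : Type u) (tY : TopologicalSpace Y), @IsSpectralTopSpace Y tY ∧
        ∃ e : X → Y, @IsEmbedding X Y _ tY e ∧ @Dense Y (@patchTop Y tY) (Set.range e) := by
  constructor
  · intro hT0
    set I := Opens X with hI
    set em : X → (I → Prop) := ⇑(TopologicalSpace.productOfMemOpens X) with hem
    set Z : Set (I → Prop) := @closure _ (patchTop (I → Prop)) (range em) with hZdef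
    have hZ : IsClosed[patchTop (I → Prop)] Z := by
      letI := patchTop (I → Prop); exact isClosed_closure
    have hsub : ∀ x, em x ∈ Z := fun x => by
      letI := patchTop (I → Prop); exact subset_closure (mem_range_self x)
    refine ⟨↥Z, inferInstance, ?_, ?_⟩
    · exact ⟨compactSpace_subtype hZ, inferInstance, quasiSober_subtype hZ,
        isBasis_CO_subtype hZ, fun U hU V hV => CO_inter_subtype hZ hU hV⟩
    · refine ⟨Set.codRestrict em Z hsub,
        (TopologicalSpace.productOfMemOpens_isEmbedding X).codRestrict _ _, ?_⟩
      have hrange : range (Set.codRestrict em Z hsub) = Subtype.val ⁻¹' (range em) := by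
        ext y
        constructor
        · rintro ⟨x, rfl⟩; exact ⟨x, rfl⟩
        · rintro ⟨x, hx⟩; exact ⟨x, Subtype.ext hx⟩
      rw [hrange]
      exact patch_dense_subtype hZ (range_subset_iff.2 hsub) hZdef.symm
  · rintro ⟨Y, tY, hspec, e, hemb, -⟩
    letI := tY
    haveI : T0Space Y := hspec.2.1
    exact hemb.t0Space
end

section
/- Let (X, τ_X) be a strongly locally spectral space. Then CO(X) = SO(X), i.e. an open subset of X is compact if and only if it is a spectral space in the subspace topology. -/
open Set TopologicalSpace Topology

/-- The family of open subsets of `X` that are spectral spaces in the subspace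
topology. -/
def SO (X : Type*) [TopologicalSpace X] : Set (Set X) :=
  {U | IsOpen U ∧ IsSpectralTopSpace ↥U}

/-- A strongly locally spectral space: locally spectral (the open spectral subspaces
cover `X`) and semispectral (the intersection of two compact open sets is compact). -/
def StronglyLocallySpectral (X : Type*) [TopologicalSpace X] : Prop :=
  ⋃₀ SO X = Set.univ ∧ ∀ U ∈ CO X, ∀ V ∈ CO X, IsCompact (U ∩ V)

/-- In a strongly locally spectral space, `CO(X) = SO(X)`: an open subset
is compact iff it is spectral in the subspace topology. -/
theorem sls_CO_eq_SO {X : Type*} [TopologicalSpace X]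
    (hX : StronglyLocallySpectral X) : CO X = SO X := by
  obtain ⟨hcov, hsemi⟩ := hX
  have hpt : ∀ x : X, ∃ V ∈ SO X, x ∈ V := by
    intro x
    have hx : x ∈ ⋃₀ SO X := hcov ▸ mem_univ x
    obtain ⟨V, hV, hxV⟩ := hx
    exact ⟨V, hV, hxV⟩
  -- X is T0
  have hT0 : T0Space X := by
    refine ⟨fun x y hxy => ?_⟩
    obtain ⟨V, ⟨hVo, _, hVt0, _⟩, hxV⟩ := hpt x
    have hyV : y ∈ V := (hxy.mem_open_iff hVo).1 hxV
    have h2 : Inseparable (⟨x, hxV⟩ : V) (⟨y, hyV⟩ : V) :=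
      (IsEmbedding.subtypeVal.isInducing.inseparable_iff).1 hxy
    have := h2.eq
    exact congrArg Subtype.val this
  -- X is quasi-sober
  have hQS : QuasiSober X := by
    haveI : ∀ s : SO X, QuasiSober s := fun s => s.2.2.2.2.1
    refine quasiSober_of_open_cover (SO X) (fun s => s.2.1) ?_
    rw [hcov]; rfl
  apply Set.Subset.antisymm
  · rintro U ⟨hUc, hUo⟩
    haveI : CompactSpace ↥U := isCompact_iff_compactSpace.mp hUc
    haveI : QuasiSober ↥U := hUo.isOpenEmbedding_subtypeVal.quasiSober
    refine ⟨hUo, inferInstance, inferInstance, inferInstance, ?_, ?_⟩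
    · -- compact opens form a basis of ↥U
      apply isTopologicalBasis_of_isOpen_of_nhds (fun u hu => hu.2)
      intro x W hxW hWo
      obtain ⟨V, ⟨hVo, _, _, _, hVb, _⟩, hxV⟩ := hpt (x : X)
      have hW'o : IsOpen (Subtype.val '' W) := hUo.isOpenMap_subtype_val W hWo
      set Sv : Set ↥V := Subtype.val ⁻¹' (Subtype.val '' W) with hSv
      have hSvo : IsOpen Sv := hW'o.preimage continuous_subtype_val
      have hxSv : (⟨(x : X), hxV⟩ : ↥V) ∈ Sv := ⟨x, hxW, rfl⟩
      obtain ⟨K, ⟨hKc, hKo⟩, hxK, hKSv⟩ := hVb.exists_subset_of_mem_open hxSv hSvo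
      have hKim : IsCompact (Subtype.val '' K) := Subtype.isCompact_iff.mp hKc
      have hKimo : IsOpen (Subtype.val '' K) := hVo.isOpenMap_subtype_val K hKo
      have hKW : Subtype.val '' K ⊆ Subtype.val '' W := by
        rintro _ ⟨k, hk, rfl⟩; exact hKSv hk
      have hKU : Subtype.val '' K ⊆ U := fun z hz => by
        obtain ⟨w, _, rfl⟩ := hKW hz; exact w.2
      refine ⟨Subtype.val ⁻¹' (Subtype.val '' K), ⟨?_, hKimo.preimage continuous_subtype_val⟩,
        ⟨⟨(⟨(x : X), hxV⟩ : ↥V), hxK, rfl⟩, ?_⟩⟩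
      · rw [Subtype.isCompact_iff, Subtype.image_preimage_coe,
          inter_eq_right.mpr hKU]
        exact hKim
      · intro u hu
        obtain ⟨w, hwW, hwu⟩ := hKW hu
        have : w = u := Subtype.ext hwu
        exact this ▸ hwW
    · -- compact opens closed under intersection
      rintro A ⟨hAc, hAo⟩ B ⟨hBc, hBo⟩
      refine ⟨?_, hAo.inter hBo⟩
      rw [Subtype.isCompact_iff, Set.image_inter Subtype.val_injective]
      exact hsemi _ ⟨Subtype.isCompact_iff.mp hAc, hUo.isOpenMap_subtype_val A hAo⟩
        _ ⟨Subtype.isCompact_iff.mp hBc, hUo.isOpenMap_subtype_val B hBo⟩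
  · rintro U ⟨hUo, hcs, _⟩
    exact ⟨isCompact_iff_compactSpace.mpr hcs, hUo⟩
end

section
/- Let (X, τ_X) be a strongly locally spectral space. Then CO(X)^o = ICO(X), where CO(X)^o = { M ⊆ X : M ∩ A ∈ CO(X) for every A ∈ CO(X) } and ICO(X) is the family of open subsets V of X such that V ∩ A is compact for every compact open A. -/
open Set TopologicalSpace Topology

/-- The family of intersection compact open subsets: open sets whose intersection with
every compact open set is compact. -/
def ICO (X : Type*) [TopologicalSpace X] : Set (Set X) :=
  {V | IsOpen V ∧ ∀ A ∈ CO X, IsCompact (V ∩ A)}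

/-- In a strongly locally spectral space,
`CO(X)^o = { M : M ∩ A ∈ CO(X) for all A ∈ CO(X) }` equals `ICO(X)`. -/
theorem sls_COo_eq_ICO {X : Type*} [TopologicalSpace X]
    (hX : StronglyLocallySpectral X) :
    {M : Set X | ∀ A ∈ CO X, M ∩ A ∈ CO X} = ICO X := by
  ext M
  constructor
  · intro hM
    refine ⟨?_, fun A hA => (hM A hA).1⟩
    -- M is open: every point of M has a compact open neighborhood A, and M ∩ A is open
    rw [isOpen_iff_forall_mem_open]
    intro x hx
    have hxU : x ∈ ⋃₀ SO X := hX.1 ▸ mem_univ x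
    obtain ⟨U, hU, hxUmem⟩ := hxU
    obtain ⟨hUopen, _, _, _, hbasis, _⟩ := hU
    obtain ⟨B, hB, hxB, -⟩ :=
      hbasis.exists_subset_of_mem_open (mem_univ (⟨x, hxUmem⟩ : U)) isOpen_univ
    have hBopen : IsOpen ((Subtype.val : U → X) '' B) :=
      hUopen.isOpenMap_subtype_val B hB.2
    have hBcompact : IsCompact ((Subtype.val : U → X) '' B) :=
      hB.1.image continuous_subtype_val
    have hACO : (Subtype.val : U → X) '' B ∈ CO X := ⟨hBcompact, hBopen⟩
    refine ⟨M ∩ (Subtype.val : U → X) '' B, inter_subset_left, (hM _ hACO).2,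
      hx, ⟨⟨x, hxUmem⟩, hxB, rfl⟩⟩
  · rintro ⟨hMopen, hM⟩ A hA
    exact ⟨hM A hA, hMopen.inter hA.2⟩
end

section
/- Let (X, τ_X) be a strongly locally spectral space and X_d ⊆ X. Then X_d is dense in the patch topology of X (the topology with basis { U \ V : U, V ∈ CO(X) }) if and only if X_d is decent, i.e. for all U, V ∈ CO(X), U ≠ V implies U ∩ X_d ≠ V ∩ X_d. -/
open Set TopologicalSpace Topology

/-- Every point of a strongly locally spectral space lies in some compact open set. -/
lemma exists_co_mem {X : Type*} [TopologicalSpace X] (hX : StronglyLocallySpectral X)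
    (x : X) : ∃ U ∈ CO X, x ∈ U := by
  have hx : x ∈ ⋃₀ SO X := hX.1 ▸ Set.mem_univ x
  obtain ⟨W, ⟨hWopen, hWspec⟩, hxW⟩ := hx
  obtain ⟨_, _, _, hbasis, _⟩ := hWspec
  have hcov : (⟨x, hxW⟩ : ↥W) ∈ ⋃₀ CO ↥W := by
    rw [hbasis.sUnion_eq]; trivial
  obtain ⟨C, ⟨hCcomp, hCopen⟩, hxC⟩ := hcov
  refine ⟨Subtype.val '' C, ⟨hCcomp.image continuous_subtype_val,
    hWopen.isOpenMap_subtype_val C hCopen⟩, ⟨⟨x, hxW⟩, hxC, rfl⟩⟩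

/-- Every patch-open set containing a point contains a basic patch set around it. -/
lemma patch_basic {X : Type*} [TopologicalSpace X] (hX : StronglyLocallySpectral X)
    {u : Set X} (hu : (patchTop X).IsOpen u) {x : X} (hx : x ∈ u) :
    ∃ A ∈ CO X, ∃ B ∈ CO X, x ∈ A \ B ∧ A \ B ⊆ u := by
  induction hu with
  | basic s hs =>
    obtain ⟨A, hA, B, hB, rfl⟩ := hs
    exact ⟨A, hA, B, hB, hx, subset_rfl⟩
  | univ =>
    obtain ⟨U, hU, hxU⟩ := exists_co_mem hX x
    exact ⟨U, hU, ∅, ⟨isCompact_empty, isOpen_empty⟩,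
      ⟨hxU, notMem_empty x⟩, subset_univ _⟩
  | inter u v _ _ ihu ihv =>
    obtain ⟨A1, hA1, B1, hB1, hx1, hs1⟩ := ihu hx.1
    obtain ⟨A2, hA2, B2, hB2, hx2, hs2⟩ := ihv hx.2
    refine ⟨A1 ∩ A2, ⟨hX.2 A1 hA1 A2 hA2, hA1.2.inter hA2.2⟩,
      B1 ∪ B2, ⟨hB1.1.union hB2.1, hB1.2.union hB2.2⟩,
      ⟨⟨hx1.1, hx2.1⟩, ?_⟩, ?_⟩
    · rintro (h | h)
      exacts [hx1.2 h, hx2.2 h]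
    · rintro y ⟨⟨hy1, hy2⟩, hyB⟩
      exact ⟨hs1 ⟨hy1, fun h => hyB (Or.inl h)⟩, hs2 ⟨hy2, fun h => hyB (Or.inr h)⟩⟩
  | sUnion S hS ih =>
    obtain ⟨s, hsS, hxs⟩ := hx
    obtain ⟨A, hA, B, hB, hxAB, hsub⟩ := ih s hsS hxs
    exact ⟨A, hA, B, hB, hxAB, hsub.trans (subset_sUnion_of_mem hsS)⟩

/-- STATEMENT 11: In a strongly locally spectral space, a subset `Xd` is dense in the
patch topology iff it is decent (distinct compact open sets have distinct traces). -/
theorem sls_patchDense_iff_decent {X : Type*} [TopologicalSpace X]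
    (hX : StronglyLocallySpectral X) (Xd : Set X) :
    @Dense X (patchTop X) Xd ↔
      ∀ U ∈ CO X, ∀ V ∈ CO X, U ≠ V → U ∩ Xd ≠ V ∩ Xd := by
  rw [@dense_iff_inter_open X (patchTop X) Xd]
  constructor
  · intro h U hU V hV hne heq
    have key : ∀ A ∈ CO X, ∀ B ∈ CO X, ∀ y ∈ A \ B, A ∩ Xd = B ∩ Xd → False := by
      intro A hA B hB y hy heq'
      have hop : (patchTop X).IsOpen (A \ B) :=
        TopologicalSpace.GenerateOpen.basic _ ⟨A, hA, B, hB, rfl⟩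
      obtain ⟨z, ⟨hzA, hzB⟩, hzd⟩ := h (A \ B) hop ⟨y, hy⟩
      have : z ∈ B ∩ Xd := heq' ▸ (⟨hzA, hzd⟩ : z ∈ A ∩ Xd)
      exact hzB this.1
    rcases Set.not_subset.mp (fun hUV => hne (le_antisymm hUV (fun z hz => by
        by_contra hzU
        exact absurd heq.symm (fun heq' => key V hV U hU z ⟨hz, hzU⟩ heq')))) with ⟨y, hyU, hyV⟩
    exact key U hU V hV y ⟨hyU, hyV⟩ heq
  · intro h u hu ⟨x, hx⟩
    obtain ⟨A, hA, B, hB, ⟨hxA, hxB⟩, hsub⟩ := patch_basic hX hu hx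
    have hAB : A ∩ B ∈ CO X := ⟨hX.2 A hA B hB, hA.2.inter hB.2⟩
    have hne : A ≠ A ∩ B := fun heq => hxB (heq ▸ hxA : x ∈ A ∩ B).2
    have hne' := h A hA (A ∩ B) hAB hne
    have hss : A ∩ B ∩ Xd ⊆ A ∩ Xd := fun y hy => ⟨hy.1.1, hy.2⟩
    obtain ⟨y, ⟨hyA, hyd⟩, hyn⟩ := Set.not_subset.mp (fun hsub' => hne' (le_antisymm hsub' hss))
    have hyB : y ∉ B := fun hB' => hyn ⟨⟨hyA, hB'⟩, hyd⟩
    exact ⟨y, hsub ⟨hyA, hyB⟩, hyd⟩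
end

section
/- Let g : (X, τ_X) → (Y, τ_Y) be a mapping between strongly locally spectral spaces. Then the following are equivalent: (1) g is spectral, i.e. g is bounded (every A ∈ CO(X) satisfies g(A) ⊆ B for some B ∈ CO(Y)) and s-continuous (g⁻¹(D) ∈ ICO(X) for every D ∈ ICO(Y)); (2) g is bounded and locally spectral, i.e. for all A ∈ CO(X) and B ∈ CO(Y) with g(A) ⊆ B, the restriction g : A → B is a spectral mapping between spectral spaces (preimages under it of compact open subsets of B are compact open in A). -/
open Set TopologicalSpace Topology

/-- A map `g` between strongly locally spectral spaces is spectral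
(bounded and s-continuous: preimages of ICO sets are ICO) iff it is bounded and locally
spectral (each restriction `g : A → B`, for `A ∈ CO(X)`, `B ∈ CO(Y)` with `g(A) ⊆ B`,
pulls compact open subsets of `B` back to compact open subsets of `A`). -/
theorem spectralMap_iff_bounded_locallySpectral {X Y : Type*}
    [TopologicalSpace X] [TopologicalSpace Y]
    (hX : StronglyLocallySpectral X) (hY : StronglyLocallySpectral Y) (g : X → Y) :
    ((∀ A ∈ CO X, ∃ B ∈ CO Y, g '' A ⊆ B) ∧ ∀ D ∈ ICO Y, g ⁻¹' D ∈ ICO X) ↔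
      ((∀ A ∈ CO X, ∃ B ∈ CO Y, g '' A ⊆ B) ∧
        ∀ A ∈ CO X, ∀ B ∈ CO Y, ∀ h : Set.MapsTo g A B,
          ∀ W ∈ CO ↥B, (Set.MapsTo.restrict g A B h) ⁻¹' W ∈ CO ↥A) := by
  constructor
  · rintro ⟨hb, hs⟩
    refine ⟨hb, ?_⟩
    intro A hA B hB h W hW
    set W' : Set Y := Subtype.val '' W with hW'def
    have hW'CO : W' ∈ CO Y :=
      ⟨hW.1.image continuous_subtype_val, hB.2.isOpenMap_subtype_val _ hW.2⟩
    have hW'ICO : W' ∈ ICO Y := ⟨hW'CO.2, fun C hC => hY.2 _ hW'CO _ hC⟩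
    have hpre := hs W' hW'ICO
    have key : (Set.MapsTo.restrict g A B h) ⁻¹' W = Subtype.val ⁻¹' (g ⁻¹' W') := by
      ext x
      simp only [Set.mem_preimage]
      constructor
      · intro hx
        exact ⟨_, hx, rfl⟩
      · rintro ⟨y, hy, hyx⟩
        have : y = Set.MapsTo.restrict g A B h x := Subtype.ext hyx
        rwa [this] at hy
    rw [key]
    constructor
    · rw [Topology.IsEmbedding.subtypeVal.isCompact_iff]
      have himg : Subtype.val '' (Subtype.val ⁻¹' (g ⁻¹' W') : Set ↥A) = g ⁻¹' W' ∩ A :=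
        (Subtype.image_preimage_coe _ _).trans (Set.inter_comm _ _)
      rw [himg]
      exact hpre.2 A hA
    · exact hpre.1.preimage continuous_subtype_val
  · rintro ⟨hb, hl⟩
    refine ⟨hb, ?_⟩
    intro D hD
    have key : ∀ A ∈ CO X, IsCompact (g ⁻¹' D ∩ A) ∧ IsOpen (g ⁻¹' D ∩ A) := by
      intro A hA
      obtain ⟨B, hB, hgAB⟩ := hb A hA
      have hmap : Set.MapsTo g A B := fun x hx => hgAB ⟨x, hx, rfl⟩
      set W : Set ↥B := Subtype.val ⁻¹' D with hWdef
      have hWCO : W ∈ CO ↥B := by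
        constructor
        · rw [Topology.IsEmbedding.subtypeVal.isCompact_iff]
          have himg : Subtype.val '' W = D ∩ B := (Subtype.image_preimage_coe _ _).trans (Set.inter_comm _ _)
          rw [himg]
          exact hD.2 B hB
        · exact hD.1.preimage continuous_subtype_val
      have hpre := hl A hA B hB hmap W hWCO
      have key2 : (Set.MapsTo.restrict g A B hmap) ⁻¹' W = Subtype.val ⁻¹' (g ⁻¹' D) := by
        ext x
        simp [hWdef, Set.MapsTo.restrict, Subtype.map]
      rw [key2] at hpre
      have himg : Subtype.val '' (Subtype.val ⁻¹' (g ⁻¹' D) : Set ↥A) = g ⁻¹' D ∩ A :=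
        (Subtype.image_preimage_coe _ _).trans (Set.inter_comm _ _)
      exact ⟨himg ▸ hpre.1.image continuous_subtype_val,
        himg ▸ hA.2.isOpenMap_subtype_val _ hpre.2⟩
    have hopen : IsOpen (g ⁻¹' D) := by
      rw [isOpen_iff_forall_mem_open]
      intro x hx
      have hxU : x ∈ ⋃₀ SO X := hX.1.symm ▸ Set.mem_univ x
      obtain ⟨U, hU, hxU⟩ := hxU
      obtain ⟨-, -, -, hbasis, -⟩ := hU.2
      obtain ⟨V, hV, hxV, -⟩ :=
        hbasis.exists_subset_of_mem_open (Set.mem_univ (⟨x, hxU⟩ : ↥U)) isOpen_univ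
      have hACO : Subtype.val '' V ∈ CO X :=
        ⟨hV.1.image continuous_subtype_val, hU.1.isOpenMap_subtype_val _ hV.2⟩
      exact ⟨g ⁻¹' D ∩ Subtype.val '' V, Set.inter_subset_left,
        (key _ hACO).2, hx, ⟨⟨x, hxU⟩, hxV, rfl⟩⟩
    exact ⟨hopen, fun A hA => (key A hA).1⟩
end

section
/- Let (X, τ_X) be a T0 topological space in which CO(X) is a basis of the topology closed under finite intersections and the condition (∗) holds: for every closed set F and every subfamily C ⊆ CO(X) centered on F (every finite subfamily C₁, …, Cₙ of C satisfies F ∩ C₁ ∩ … ∩ Cₙ ≠ ∅), the intersection F ∩ ⋂C is nonempty. Then: (1) (CO(X), ∪, ∩, ∅) is a distributive lattice with zero; (2) the map Ψ : I ↦ ⋃I is a lattice isomorphism from the lattice of all ideals of CO(X) onto the lattice τ_X of open sets; (3) for each prime ideal p of CO(X) there is a unique point x_p ∈ X with ⋃p = X \ cl{x_p}; (4) the map p ↦ x_p is a homeomorphism from PI(CO(X)) (with the topology whose open sets are the sets D(I) = { p : I ⊄ p } for ideals I of CO(X)) onto (X, τ_X). -/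
open Set TopologicalSpace Topology

/-- An ideal of a lattice `G` of subsets (with operations `∪`, `∩` and zero `∅`):
a nonempty subfamily of `G`, downward closed within `G` and closed under `∪`. -/
def IsIdealOn {α : Type*} (G I : Set (Set α)) : Prop :=
  I ⊆ G ∧ I.Nonempty ∧ (∀ A ∈ I, ∀ B ∈ G, B ⊆ A → B ∈ I) ∧
    ∀ A ∈ I, ∀ B ∈ I, A ∪ B ∈ I

/-- A prime ideal of the lattice `G` of sets: a proper ideal `p` with
`A ∩ B ∈ p` implying `A ∈ p` or `B ∈ p`. -/
def IsPrimeIdealOn {α : Type*} (G p : Set (Set α)) : Prop :=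
  IsIdealOn G p ∧ p ≠ G ∧ ∀ A ∈ G, ∀ B ∈ G, A ∩ B ∈ p → A ∈ p ∨ B ∈ p

/-- The prime ideals of the lattice `G` of sets. -/
def PrimeIdealsOn {α : Type*} (G : Set (Set α)) : Type _ :=
  {p : Set (Set α) // IsPrimeIdealOn G p}

/-- The Stone topology on the prime ideals of `G`, whose open sets are the sets
`D(I) = { p : I ⊄ p }` for ideals `I` of `G`. -/
def stoneTopOn {α : Type*} (G : Set (Set α)) : TopologicalSpace (PrimeIdealsOn G) :=
  TopologicalSpace.generateFrom
    {S | ∃ I : Set (Set α), IsIdealOn G I ∧ S = {p : PrimeIdealsOn G | ¬ I ⊆ p.1}}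

section Aux

variable {X : Type*} [TopologicalSpace X]

lemma empty_mem_CO : (∅ : Set X) ∈ CO X := ⟨isCompact_empty, isOpen_empty⟩

lemma empty_mem_ideal {I : Set (Set X)} (hI : IsIdealOn (CO X) I) : ∅ ∈ I := by
  obtain ⟨hIG, ⟨A, hA⟩, hdown, -⟩ := hI
  exact hdown A hA ∅ empty_mem_CO (empty_subset A)

/-- Characterization of ideal membership. -/
lemma mem_ideal_of_subset_sUnion {I : Set (Set X)} (hI : IsIdealOn (CO X) I)
    {U : Set X} (hU : U ∈ CO X) (hsub : U ⊆ ⋃₀ I) : U ∈ I := by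
  obtain ⟨t, ht⟩ := hU.1.elim_finite_subcover (fun A : I => (A : Set X))
    (fun A => (hI.1 A.2).2) (by rwa [sUnion_eq_iUnion] at hsub)
  classical
  have hmem : ∀ t : Finset I, (⋃ i ∈ t, (i : Set X)) ∈ I := by
    intro t
    induction t using Finset.induction_on with
    | empty => simpa using empty_mem_ideal hI
    | @insert a t hnot ih =>
      rw [Finset.set_biUnion_insert]
      exact hI.2.2.2 _ a.2 _ ih
  exact hI.2.2.1 _ (hmem t) U hU ht

lemma mem_ideal_iff {I : Set (Set X)} (hI : IsIdealOn (CO X) I) {U : Set X} :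
    U ∈ I ↔ U ∈ CO X ∧ U ⊆ ⋃₀ I :=
  ⟨fun h => ⟨hI.1 h, subset_sUnion_of_mem h⟩,
   fun h => mem_ideal_of_subset_sUnion hI h.1 h.2⟩

lemma isOpen_sUnion_ideal {I : Set (Set X)} (hI : IsIdealOn (CO X) I) : IsOpen (⋃₀ I) :=
  isOpen_sUnion fun _ h => (hI.1 h).2

/-- The ideal of compact open subsets of an open set. -/
lemma isIdealOn_below (h_union : ∀ U ∈ CO X, ∀ V ∈ CO X, U ∪ V ∈ CO X) {V : Set X}
    (hV : IsOpen V) : IsIdealOn (CO X) {U | U ∈ CO X ∧ U ⊆ V} := by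
  refine ⟨fun U hU => hU.1, ⟨∅, empty_mem_CO, empty_subset V⟩,
    fun A hA B hB hBA => ⟨hB, hBA.trans hA.2⟩,
    fun A hA B hB => ⟨h_union A hA.1 B hB.1, union_subset hA.2 hB.2⟩⟩

variable (h_basis : TopologicalSpace.IsTopologicalBasis (CO X))
include h_basis

lemma notMem_closure_iff {x y : X} :
    y ∉ closure ({x} : Set X) ↔ ∃ U ∈ CO X, y ∈ U ∧ x ∉ U := by
  rw [mem_closure_iff]
  push_neg
  constructor
  · rintro ⟨o, ho, hyo, hne⟩
    obtain ⟨U, hU, hyU, hUo⟩ := h_basis.exists_subset_of_mem_open hyo ho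
    refine ⟨U, hU, hyU, fun hx => ?_⟩
    exact absurd (show x ∈ o ∩ {x} from ⟨hUo hx, rfl⟩) (by simp [hne])
  · rintro ⟨U, hU, hyU, hxU⟩
    exact ⟨U, hU.2, hyU, by simp [inter_singleton_nonempty, hxU]⟩


lemma isPrimeIdealOn_point (x : X) :
    IsPrimeIdealOn (CO X) {U | U ∈ CO X ∧ x ∉ U} := by
  obtain ⟨W, hW, hxW, -⟩ := h_basis.exists_subset_of_mem_open (mem_univ x) isOpen_univ
  refine ⟨⟨fun U hU => hU.1, ⟨∅, empty_mem_CO, notMem_empty x⟩,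
    fun A hA B hB hBA => ⟨hB, fun hx => hA.2 (hBA hx)⟩,
    fun A hA B hB => ⟨⟨hA.1.1.union hB.1.1, hA.1.2.union hB.1.2⟩,
      fun hx => hx.elim hA.2 hB.2⟩⟩, ?_, ?_⟩
  · intro h
    rw [← h] at hW
    exact hW.2 hxW
  · intro A hA B hB hAB
    by_cases hx : x ∈ A
    · exact Or.inr ⟨hB, fun hxB => hAB.2 ⟨hx, hxB⟩⟩
    · exact Or.inl ⟨hA, hx⟩

lemma sUnion_point_ideal (x : X) :
    ⋃₀ {U | U ∈ CO X ∧ x ∉ U} = (closure ({x} : Set X))ᶜ := by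
  ext y
  simp only [mem_sUnion, mem_compl_iff, notMem_closure_iff h_basis, mem_setOf_eq]
  tauto

lemma generic_point [T0Space X]
    (h_inter : ∀ U ∈ CO X, ∀ V ∈ CO X, U ∩ V ∈ CO X)
    (h_star : ∀ F : Set X, IsClosed F → ∀ C ⊆ CO X,
      (∀ 𝒮 : Finset (Set X), ↑𝒮 ⊆ C → (F ∩ ⋂₀ (𝒮 : Set (Set X))).Nonempty) →
      (F ∩ ⋂₀ C).Nonempty)
    {p : Set (Set X)} (hp : IsPrimeIdealOn (CO X) p) :
    ∃! x : X, ⋃₀ p = (closure {x})ᶜ := by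
  classical
  have hpI := hp.1
  set F : Set X := (⋃₀ p)ᶜ with hFdef
  have hF : IsClosed F := (isOpen_sUnion_ideal hpI).isClosed_compl
  obtain ⟨W, hW, hWp⟩ : ∃ W ∈ CO X, W ∉ p :=
    Set.not_subset.mp (fun h => hp.2.1 (subset_antisymm hpI.1 h))
  have key : ∀ U ∈ CO X, U ∉ p → (F ∩ U).Nonempty := by
    intro U hU hUp
    by_contra h
    rw [not_nonempty_iff_eq_empty] at h
    refine hUp (mem_ideal_of_subset_sUnion hpI hU fun y hy => ?_)
    by_contra hy2
    exact absurd (show y ∈ F ∩ U from ⟨hy2, hy⟩) (by simp [h])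
  set C : Set (Set X) := {U | U ∈ CO X ∧ U ∉ p} with hCdef
  have key2 : ∀ 𝒮 : Finset (Set X), ↑𝒮 ⊆ C →
      ∃ U, (U ∈ CO X ∧ U ∉ p) ∧ U ⊆ ⋂₀ (𝒮 : Set (Set X)) := by
    intro 𝒮
    induction 𝒮 using Finset.induction_on with
    | empty => exact fun _ => ⟨W, ⟨hW, hWp⟩, by simp⟩
    | @insert a t ha ih =>
      intro hins
      have haC : a ∈ C := hins (by simp)
      obtain ⟨U, ⟨hU, hUp⟩, hUsub⟩ := ih (fun x hx => hins (by simp [hx]))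
      refine ⟨a ∩ U, ⟨h_inter a haC.1 U hU, fun hmem => ?_⟩, ?_⟩
      · rcases hp.2.2 a haC.1 U hU hmem with h | h
        · exact haC.2 h
        · exact hUp h
      · rw [Finset.coe_insert, sInter_insert]
        exact inter_subset_inter (subset_refl a) hUsub
  have hFIP : ∀ 𝒮 : Finset (Set X), ↑𝒮 ⊆ C → (F ∩ ⋂₀ (𝒮 : Set (Set X))).Nonempty := by
    intro 𝒮 h𝒮
    obtain ⟨U, ⟨hU, hUp⟩, hUsub⟩ := key2 𝒮 h𝒮
    obtain ⟨y, hy⟩ := key U hU hUp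
    exact ⟨y, hy.1, hUsub hy.2⟩
  obtain ⟨x, hxF, hxC⟩ := h_star F hF C (fun U hU => hU.1) hFIP
  have hclx : closure ({x} : Set X) = F := by
    refine subset_antisymm (closure_minimal (singleton_subset_iff.mpr hxF) hF) ?_
    intro y hyF
    by_contra hy
    obtain ⟨U, hU, hyU, hxU⟩ := (notMem_closure_iff h_basis).mp hy
    have hUC : U ∈ C := ⟨hU, fun hUp => hyF ⟨U, hUp, hyU⟩⟩
    exact hxU (hxC U hUC)
  refine ⟨x, by show ⋃₀ p = (closure {x})ᶜ; rw [hclx, hFdef, compl_compl], ?_⟩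
  intro y hy
  have : closure ({y} : Set X) = closure ({x} : Set X) := by
    rw [hclx, hFdef]
    rw [hy]
    simp
  exact (inseparable_iff_closure_eq.mpr this).eq

omit h_basis in
lemma mem_prime_iff {p : Set (Set X)} (hp : IsPrimeIdealOn (CO X) p) {x : X}
    (hx : ⋃₀ p = (closure ({x} : Set X))ᶜ) {U : Set X} (hU : U ∈ CO X) :
    U ∈ p ↔ x ∉ U := by
  constructor
  · intro hUp hxU
    have : x ∈ ⋃₀ p := ⟨U, hUp, hxU⟩
    rw [hx] at this
    exact this (subset_closure (mem_singleton x))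
  · intro hxU
    refine mem_ideal_of_subset_sUnion hp.1 hU fun y hyU => ?_
    rw [hx]
    intro hyc
    obtain ⟨z, hz1, hz2⟩ := mem_closure_iff.mp hyc U hU.2 hyU
    exact hxU (hz2 ▸ hz1)

end Aux

/-- Stone: Let `X` be a T0 space in which `CO(X)` is a basis closed under
finite intersections and condition (∗) holds. Then (1) `CO(X)` is a distributive lattice
with zero (contains `∅`, closed under `∪` and `∩`); (2) `I ↦ ⋃ I` is a lattice
isomorphism from the ideals of `CO(X)` onto the open sets; (3) each prime ideal `p` of
`CO(X)` has a unique point `x_p` with `⋃ p = X \ cl{x_p}`; (4) `p ↦ x_p` is a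
homeomorphism from `PI(CO(X))` onto `X`. -/
theorem stone_representation {X : Type*} [TopologicalSpace X] [T0Space X]
    (h_basis : TopologicalSpace.IsTopologicalBasis (CO X))
    (h_inter : ∀ U ∈ CO X, ∀ V ∈ CO X, U ∩ V ∈ CO X)
    (h_star : ∀ F : Set X, IsClosed F → ∀ C ⊆ CO X,
      (∀ 𝒮 : Finset (Set X), ↑𝒮 ⊆ C → (F ∩ ⋂₀ (𝒮 : Set (Set X))).Nonempty) →
      (F ∩ ⋂₀ C).Nonempty) :
    (∅ ∈ CO X ∧ (∀ U ∈ CO X, ∀ V ∈ CO X, U ∪ V ∈ CO X) ∧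
      (∀ U ∈ CO X, ∀ V ∈ CO X, U ∩ V ∈ CO X)) ∧
    (Set.BijOn (fun I : Set (Set X) => ⋃₀ I) {I : Set (Set X) | IsIdealOn (CO X) I} {U | IsOpen U} ∧
      ∀ I J : Set (Set X), IsIdealOn (CO X) I → IsIdealOn (CO X) J →
        (I ⊆ J ↔ ⋃₀ I ⊆ ⋃₀ J)) ∧
    (∀ p : Set (Set X), IsPrimeIdealOn (CO X) p →
      ∃! x : X, ⋃₀ p = (closure {x})ᶜ) ∧
    (∃ h : @Homeomorph (PrimeIdealsOn (CO X)) X (stoneTopOn (CO X)) _,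
      ∀ p : PrimeIdealsOn (CO X), ⋃₀ p.1 = (closure {h p})ᶜ) := by

  classical
  have h_union : ∀ U ∈ CO X, ∀ V ∈ CO X, U ∪ V ∈ CO X :=
    fun U hU V hV => ⟨hU.1.union hV.1, hU.2.union hV.2⟩
  have part3 : ∀ p : Set (Set X), IsPrimeIdealOn (CO X) p →
      ∃! x : X, ⋃₀ p = (closure {x})ᶜ :=
    fun p hp => generic_point h_basis h_inter h_star hp
  refine ⟨⟨empty_mem_CO, h_union, h_inter⟩, ⟨⟨?_, ?_, ?_⟩, ?_⟩, part3, ?_⟩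
  · intro I hI
    exact isOpen_sUnion_ideal hI
  · intro I hI J hJ h
    have h' : ⋃₀ I = ⋃₀ J := h
    ext U
    rw [mem_ideal_iff hI, mem_ideal_iff hJ, h']
  · intro V hV
    exact ⟨{U | U ∈ CO X ∧ U ⊆ V}, isIdealOn_below h_union hV,
      (h_basis.open_eq_sUnion' hV).symm⟩
  · intro I J hI hJ
    constructor
    · rintro h x ⟨U, hU, hxU⟩
      exact ⟨U, h hU, hxU⟩
    · intro h U hU
      exact mem_ideal_of_subset_sUnion hJ (hI.1 hU) ((subset_sUnion_of_mem hU).trans h)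
  · letI : TopologicalSpace (PrimeIdealsOn (CO X)) := stoneTopOn (CO X)
    choose f hf hfu using fun p : PrimeIdealsOn (CO X) => part3 p.1 p.2
    set ψ : X → PrimeIdealsOn (CO X) :=
      fun x => ⟨{U | U ∈ CO X ∧ x ∉ U}, isPrimeIdealOn_point h_basis x⟩ with hψ
    have hmem : ∀ (p : PrimeIdealsOn (CO X)) (U : Set X), U ∈ CO X → (U ∈ p.1 ↔ f p ∉ U) :=
      fun p U hU => mem_prime_iff p.2 (hf p) hU
    have left_inv : Function.LeftInverse ψ f := by
      intro p
      apply Subtype.ext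
      ext U
      simp only [hψ, mem_setOf_eq]
      constructor
      · rintro ⟨hU, hx⟩
        exact (hmem p U hU).mpr hx
      · intro h
        exact ⟨p.2.1.1 h, (hmem p U (p.2.1.1 h)).mp h⟩
    have right_inv : Function.RightInverse ψ f := by
      intro x
      have h1 : ⋃₀ (ψ x).1 = (closure ({x} : Set X))ᶜ := sUnion_point_ideal h_basis x
      have h2 := hf (ψ x)
      have hcl : closure ({f (ψ x)} : Set X) = closure ({x} : Set X) :=
        compl_inj_iff.mp (h2.symm.trans h1)
      exact (inseparable_iff_closure_eq.mpr hcl).eq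
    have cont_f : Continuous f := by
      rw [continuous_def]
      intro V hV
      have hIV : IsIdealOn (CO X) {U | U ∈ CO X ∧ U ⊆ V} := isIdealOn_below h_union hV
      have heq : f ⁻¹' V = {p : PrimeIdealsOn (CO X) | ¬ {U | U ∈ CO X ∧ U ⊆ V} ⊆ p.1} := by
        ext p
        simp only [mem_preimage, mem_setOf_eq, not_subset]
        constructor
        · intro hfp
          obtain ⟨U, hU, hfU, hUV⟩ := h_basis.exists_subset_of_mem_open hfp hV
          exact ⟨U, ⟨hU, hUV⟩, fun h => (hmem p U hU).mp h hfU⟩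
        · rintro ⟨U, ⟨hU, hUV⟩, hUp⟩
          exact hUV (not_not.mp fun h => hUp ((hmem p U hU).mpr h))
      rw [heq]
      exact isOpen_generateFrom_of_mem ⟨_, hIV, rfl⟩
    have cont_ψ : @Continuous X (PrimeIdealsOn (CO X)) _ (stoneTopOn (CO X)) ψ := by
      unfold stoneTopOn
      rw [continuous_generateFrom_iff]
      rintro S ⟨I, hI, rfl⟩
      have heq : ψ ⁻¹' {p : PrimeIdealsOn (CO X) | ¬ I ⊆ p.1} = ⋃₀ I := by
        ext x
        simp only [mem_preimage, mem_setOf_eq, not_subset, hψ, mem_sUnion]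
        constructor
        · rintro ⟨U, hUI, hU⟩
          refine ⟨U, hUI, ?_⟩
          by_contra hx
          exact hU ⟨hI.1 hUI, hx⟩
        · rintro ⟨U, hUI, hxU⟩
          exact ⟨U, hUI, fun h => h.2 hxU⟩
      rw [heq]
      exact isOpen_sUnion_ideal hI
    exact ⟨⟨⟨f, ψ, left_inv, right_inv⟩, cont_f, cont_ψ⟩, fun p => hf p⟩
end

section
/- For a topological space (X, τ_X), the following are equivalent: (1) X is strongly locally spectral; (2) X is T0, CO(X) is a basis of τ_X closed under finite intersections, and the condition (∗) holds: for every closed set F and every subfamily C ⊆ CO(X) such that every finite subfamily C₁, …, Cₙ of C satisfies F ∩ C₁ ∩ … ∩ Cₙ ≠ ∅, the intersection F ∩ ⋂C is nonempty. -/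
open Set TopologicalSpace Topology

/-- Nonempty finite intersections of compact open sets are compact open, provided
`CO X` is closed under binary intersections. -/
lemma sInter_finset_mem_CO {X : Type*} [TopologicalSpace X]
    (hco : ∀ U ∈ CO X, ∀ V ∈ CO X, U ∩ V ∈ CO X) :
    ∀ 𝒮 : Finset (Set X), ↑𝒮 ⊆ CO X → 𝒮.Nonempty → ⋂₀ (𝒮 : Set (Set X)) ∈ CO X := by
  intro 𝒮
  classical
  induction 𝒮 using Finset.induction_on with
  | empty => intro _ h; simp at h
  | @insert a s ha ih =>
    intro hsub _
    have haCO : a ∈ CO X := hsub (by simp)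
    have hsub' : ↑s ⊆ CO X := fun x hx => hsub (by simp [hx])
    rcases s.eq_empty_or_nonempty with rfl | hne
    · simpa using haCO
    · have h := ih hsub' hne
      rw [Finset.coe_insert, sInter_insert]
      exact hco a haCO _ h

/-- The condition (∗) together with `CO X` being a basis implies quasi-soberness. -/
lemma quasiSober_of_star {X : Type*} [TopologicalSpace X]
    (hb : IsTopologicalBasis (CO X))
    (hstar : ∀ F : Set X, IsClosed F → ∀ C ⊆ CO X,
      (∀ 𝒮 : Finset (Set X), ↑𝒮 ⊆ C → (F ∩ ⋂₀ (𝒮 : Set (Set X))).Nonempty) →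
      (F ∩ ⋂₀ C).Nonempty) : QuasiSober X := by
  constructor
  intro S hS hS'
  set C : Set (Set X) := {V | V ∈ CO X ∧ (S ∩ V).Nonempty} with hCdef
  have hfin : ∀ 𝒮 : Finset (Set X), ↑𝒮 ⊆ C → (S ∩ ⋂₀ (𝒮 : Set (Set X))).Nonempty := by
    intro 𝒮
    classical
    induction 𝒮 using Finset.induction_on with
    | empty => intro _; simpa using hS.1
    | @insert a s ha ih =>
      intro hsub
      have h1 : a ∈ C := hsub (by simp)
      have h2 : ↑s ⊆ C := fun x hx => hsub (by simp [hx])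
      have h3 := ih h2
      rw [Finset.coe_insert, sInter_insert]
      have hopen : IsOpen (⋂₀ (s : Set (Set X))) :=
        Set.Finite.isOpen_sInter s.finite_toSet (fun V hV => (h2 hV).1.2)
      exact hS.2 a _ h1.1.2 hopen h1.2 h3
  obtain ⟨x, hxS, hxC⟩ := hstar S hS' C (fun V hV => hV.1) hfin
  refine ⟨x, subset_antisymm (closure_minimal (singleton_subset_iff.mpr hxS) hS') ?_⟩
  intro y hy
  rw [hb.mem_closure_iff]
  intro V hV hyV
  exact ⟨x, hxC V ⟨hV, ⟨y, hy, hyV⟩⟩, rfl⟩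

/-- In a T0, quasi-sober space where `CO X` is a basis closed under binary
intersections, every compact open set is a spectral space. -/
lemma spectral_of_mem_CO {X : Type*} [TopologicalSpace X] [T0Space X] [QuasiSober X]
    (hb : IsTopologicalBasis (CO X))
    (hco : ∀ U ∈ CO X, ∀ V ∈ CO X, U ∩ V ∈ CO X)
    {U : Set X} (hU : U ∈ CO X) : IsSpectralTopSpace ↥U := by
  refine ⟨isCompact_iff_compactSpace.mp hU.1, inferInstance,
    Topology.IsOpenEmbedding.quasiSober hU.2.isOpenEmbedding_subtypeVal, ?_, ?_⟩
  · refine isTopologicalBasis_of_isOpen_of_nhds (fun s hs => hs.2) ?_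
    intro x O hxO hO
    obtain ⟨W, hW, rfl⟩ := isOpen_induced_iff.mp hO
    have hx' : (x : X) ∈ W ∩ U := ⟨hxO, x.2⟩
    obtain ⟨V, hV, hxV, hVsub⟩ := hb.exists_subset_of_mem_open hx' (hW.inter hU.2)
    refine ⟨Subtype.val ⁻¹' V, ⟨?_, hV.2.preimage continuous_subtype_val⟩, hxV,
      fun y hy => (hVsub hy).1⟩
    rw [Subtype.isCompact_iff, Subtype.image_preimage_coe,
      inter_eq_self_of_subset_right (fun z hz => (hVsub hz).2)]
    exact hV.1
  · intro A hA B hB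
    refine ⟨?_, hA.2.inter hB.2⟩
    have hAim : Subtype.val '' A ∈ CO X :=
      ⟨hA.1.image continuous_subtype_val, hU.2.isOpenMap_subtype_val _ hA.2⟩
    have hBim : Subtype.val '' B ∈ CO X :=
      ⟨hB.1.image continuous_subtype_val, hU.2.isOpenMap_subtype_val _ hB.2⟩
    have h := hco _ hAim _ hBim
    rw [Subtype.isCompact_iff]
    have himg : Subtype.val '' (A ∩ B) = (Subtype.val '' A) ∩ (Subtype.val '' B) :=
      Set.image_inter Subtype.coe_injective
    rw [himg]
    exact h.1

lemma t0_of_cover {X : Type*} [TopologicalSpace X] (hcov : ⋃₀ SO X = Set.univ) :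
    T0Space X := by
  rw [t0Space_iff_inseparable]
  intro x y hxy
  obtain ⟨U, hU, hxU⟩ : x ∈ ⋃₀ SO X := hcov ▸ mem_univ x
  have hyU : y ∈ U := (hxy.mem_open_iff hU.1).mp hxU
  haveI : T0Space ↥U := hU.2.2.1
  have hins : Inseparable (⟨x, hxU⟩ : U) (⟨y, hyU⟩ : U) := by
    rw [inseparable_iff_forall_isOpen] at hxy ⊢
    intro s hs
    obtain ⟨W, hW, rfl⟩ := isOpen_induced_iff.mp hs
    exact hxy W hW
  exact congrArg Subtype.val hins.eq

lemma basis_of_cover {X : Type*} [TopologicalSpace X] (hcov : ⋃₀ SO X = Set.univ) :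
    IsTopologicalBasis (CO X) := by
  refine isTopologicalBasis_of_isOpen_of_nhds (fun s hs => hs.2) ?_
  intro x W hxW hW
  obtain ⟨U, hU, hxU⟩ : x ∈ ⋃₀ SO X := hcov ▸ mem_univ x
  have hbU := hU.2.2.2.2.1
  have hxO : (⟨x, hxU⟩ : U) ∈ (Subtype.val ⁻¹' W : Set U) := hxW
  obtain ⟨B, hB, hxB, hBsub⟩ := hbU.exists_subset_of_mem_open hxO
    (hW.preimage continuous_subtype_val)
  refine ⟨Subtype.val '' B, ⟨hB.1.image continuous_subtype_val,
    hU.1.isOpenMap_subtype_val _ hB.2⟩, ⟨⟨x, hxU⟩, hxB, rfl⟩, ?_⟩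
  rintro z ⟨b, hb, rfl⟩
  exact hBsub hb

lemma quasiSober_of_cover {X : Type*} [TopologicalSpace X] (hcov : ⋃₀ SO X = Set.univ) :
    QuasiSober X := by
  haveI : ∀ s : SO X, QuasiSober s := fun s => s.2.2.2.2.1
  exact quasiSober_of_open_cover (SO X) (fun s => s.2.1) hcov

/-- The condition (∗) holds in quasi-sober semispectral spaces. -/
lemma star_of_sls {X : Type*} [TopologicalSpace X] [QuasiSober X]
    (hco : ∀ U ∈ CO X, ∀ V ∈ CO X, U ∩ V ∈ CO X)
    (F : Set X) (hF : IsClosed F) (C : Set (Set X)) (hC : C ⊆ CO X)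
    (hfip : ∀ 𝒮 : Finset (Set X), ↑𝒮 ⊆ C → (F ∩ ⋂₀ (𝒮 : Set (Set X))).Nonempty) :
    (F ∩ ⋂₀ C).Nonempty := by
  classical
  rcases C.eq_empty_or_nonempty with rfl | ⟨C₀, hC₀⟩
  · simpa using hfip ∅ (by simp)
  set P : Set (Set X) := {G | IsClosed G ∧ G ⊆ F ∧
    ∀ 𝒮 : Finset (Set X), ↑𝒮 ⊆ C → (G ∩ ⋂₀ (𝒮 : Set (Set X))).Nonempty} with hPdef
  have hKco : ∀ 𝒮 : Finset (Set X), ↑𝒮 ⊆ C →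
      IsCompact (⋂₀ ((insert C₀ 𝒮 : Finset (Set X)) : Set (Set X))) := by
    intro 𝒮 h𝒮
    refine (sInter_finset_mem_CO hco (insert C₀ 𝒮) ?_ ⟨C₀, by simp⟩).1
    intro V hV
    rcases Finset.mem_insert.mp hV with rfl | hV'
    · exact hC hC₀
    · exact hC (h𝒮 hV')
  have hchain : ∀ c ⊆ P, IsChain (· ⊆ ·) c → c.Nonempty →
      ∃ lb ∈ P, ∀ s ∈ c, lb ⊆ s := by
    intro c hcP hch hcne
    refine ⟨⋂₀ c, ⟨isClosed_sInter (fun G hG => (hcP hG).1), ?_, ?_⟩,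
      fun s hs => sInter_subset_of_mem hs⟩
    · obtain ⟨G, hG⟩ := hcne
      exact (sInter_subset_of_mem hG).trans (hcP hG).2.1
    · intro 𝒮 h𝒮
      set K : Set X := ⋂₀ ((insert C₀ 𝒮 : Finset (Set X)) : Set (Set X)) with hKdef
      have hKsub : K ⊆ ⋂₀ (𝒮 : Set (Set X)) := by
        intro z hz V hV
        exact hz V (by simp [hV])
      have key : (K ∩ ⋂ G : c, (G : Set X)).Nonempty := by
        apply (hKco 𝒮 h𝒮).inter_iInter_nonempty
        · exact fun G => (hcP G.2).1
        · intro u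
          rcases u.eq_empty_or_nonempty with rfl | ⟨G₀, hG₀⟩
          · simp only [Finset.notMem_empty, iInter_of_empty, iInter_univ, inter_univ]
            obtain ⟨z, hz⟩ := (hcP hcne.choose_spec).2.2 (insert C₀ 𝒮)
              (by intro V hV
                  rcases Finset.mem_insert.mp hV with rfl | hV'
                  · exact hC₀
                  · exact h𝒮 hV')
            exact ⟨z, hz.2⟩
          · obtain ⟨m, hmu, hmmin⟩ := u.exists_minimal ⟨G₀, hG₀⟩
            have hmle : ∀ a ∈ u, (m : Set X) ⊆ (a : Set X) := by
              intro a hau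
              rcases eq_or_ne a m with rfl | hne
              · exact subset_rfl
              · rcases hch.total a.2 m.2 with h | h
                · exact absurd (Subtype.coe_lt_coe.mp
                    (lt_of_le_of_ne h (fun e => hne (Subtype.ext e))))
                    (fun hlt => lt_irrefl _ (hlt.trans_le (hmmin hau hlt.le)))
                · exact h
            obtain ⟨z, hzm, hzK⟩ := (hcP m.2).2.2 (insert C₀ 𝒮)
              (by intro V hV
                  rcases Finset.mem_insert.mp hV with rfl | hV'
                  · exact hC₀
                  · exact h𝒮 hV')
            exact ⟨z, hzK, mem_iInter₂.mpr fun a hau => hmle a hau hzm⟩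
      obtain ⟨z, hzK, hzI⟩ := key
      refine ⟨z, ?_, hKsub hzK⟩
      intro G hG
      exact mem_iInter.mp hzI ⟨G, hG⟩
  obtain ⟨G, hGF, hGmem, hGmin⟩ := zorn_superset_nonempty P hchain F ⟨hF, subset_rfl, hfip⟩
  have hGne : G.Nonempty := by simpa using hGmem.2.2 ∅ (by simp)
  have failFIP : ∀ u : Set X, IsOpen u → (G ∩ u).Nonempty →
      ∃ 𝒮 : Finset (Set X), ↑𝒮 ⊆ C ∧ (G \ u) ∩ ⋂₀ (𝒮 : Set (Set X)) = ∅ := by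
    intro u hu ⟨a, haG, hau⟩
    by_contra h
    push_neg at h
    have hmem : G \ u ∈ P := ⟨hGmem.1.sdiff hu, (diff_subset).trans hGmem.2.1,
      fun 𝒮 h𝒮 => h 𝒮 h𝒮⟩
    have := hGmin hmem diff_subset
    exact (this haG).2 hau
  have hGirr : IsIrreducible G := by
    refine ⟨hGne, ?_⟩
    intro u v hu hv hGu hGv
    by_contra hempty
    rw [not_nonempty_iff_eq_empty] at hempty
    obtain ⟨𝒮u, h𝒮u, hAu⟩ := failFIP u hu hGu
    obtain ⟨𝒮v, h𝒮v, hAv⟩ := failFIP v hv hGv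
    obtain ⟨z, hzG, hzI⟩ := hGmem.2.2 (𝒮u ∪ 𝒮v)
      (by intro V hV
          rcases Finset.mem_union.mp (Finset.mem_coe.mp hV) with h | h
          · exact h𝒮u h
          · exact h𝒮v h)
    have hzu : z ∉ u ∨ z ∉ v := by
      by_contra h
      push_neg at h
      exact absurd hempty (nonempty_iff_ne_empty.mp ⟨z, hzG, h.1, h.2⟩)
    rcases hzu with h | h
    · exact absurd hAu (nonempty_iff_ne_empty.mp
        ⟨z, ⟨hzG, h⟩, fun V hV => hzI V (by simp [hV])⟩)
    · exact absurd hAv (nonempty_iff_ne_empty.mp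
        ⟨z, ⟨hzG, h⟩, fun V hV => hzI V (by simp [hV])⟩)
  obtain ⟨x, hx⟩ := QuasiSober.sober hGirr hGmem.1
  refine ⟨x, hGmem.2.1 hx.mem, ?_⟩
  intro V hV
  have hGV : (G ∩ V).Nonempty := by
    have := hGmem.2.2 {V} (by simpa using hV)
    simpa using this
  exact (hx.mem_open_set_iff (hC hV).2).mpr hGV

/-- STATEMENT 15: A topological space is strongly locally spectral iff it is T0,
`CO(X)` is a basis of the topology closed under finite intersections, and the
centered-intersection condition (∗) holds. -/
theorem sls_iff_stone_conditions {X : Type*} [TopologicalSpace X] :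
    StronglyLocallySpectral X ↔
      (T0Space X ∧ TopologicalSpace.IsTopologicalBasis (CO X) ∧
        (∀ U ∈ CO X, ∀ V ∈ CO X, U ∩ V ∈ CO X) ∧
        ∀ F : Set X, IsClosed F → ∀ C ⊆ CO X,
          (∀ 𝒮 : Finset (Set X), ↑𝒮 ⊆ C → (F ∩ ⋂₀ (𝒮 : Set (Set X))).Nonempty) →
          (F ∩ ⋂₀ C).Nonempty) := by
  constructor
  · rintro ⟨hcov, hsemi⟩
    have hco : ∀ U ∈ CO X, ∀ V ∈ CO X, U ∩ V ∈ CO X :=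
      fun U hU V hV => ⟨hsemi U hU V hV, hU.2.inter hV.2⟩
    haveI := quasiSober_of_cover hcov
    exact ⟨t0_of_cover hcov, basis_of_cover hcov, hco, star_of_sls hco⟩
  · rintro ⟨hT0, hb, hco, hstar⟩
    haveI := hT0
    haveI := quasiSober_of_star hb hstar
    constructor
    · apply eq_univ_of_forall
      intro x
      obtain ⟨V, hV, hxV, -⟩ := hb.exists_subset_of_mem_open (mem_univ x) isOpen_univ
      exact ⟨V, ⟨hV.2, spectral_of_mem_CO hb hco hV⟩, hxV⟩
    · exact fun U hU V hV => (hco U hU V hV).1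
end

section
/- Let (L, ∨, ∧, 0) be a distributive lattice with zero. Then the space PF(L) of prime filters of L with the topology generated by { D^f(a) : a ∈ L }, where D^f(a) = { q ∈ PF(L) : a ∈ q }, is a strongly locally spectral topological space; likewise the space PI(L) of prime ideals with the topology generated by { D(a) : a ∈ L }, where D(a) = { p ∈ PI(L) : a ∉ p }, is strongly locally spectral. -/
open Set TopologicalSpace Topology

/-- An ideal of a distributive lattice with zero. -/
def IsIdealZ {L : Type*} [DistribLattice L] [OrderBot L] (I : Set L) : Prop :=
  I.Nonempty ∧ (∀ a ∈ I, ∀ b, b ≤ a → b ∈ I) ∧ ∀ a ∈ I, ∀ b ∈ I, a ⊔ b ∈ I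

/-- A prime ideal of a distributive lattice with zero. -/
def IsPrimeIdealZ {L : Type*} [DistribLattice L] [OrderBot L] (p : Set L) : Prop :=
  IsIdealZ p ∧ p ≠ Set.univ ∧ ∀ a b : L, a ⊓ b ∈ p → a ∈ p ∨ b ∈ p

/-- A prime filter of a distributive lattice with zero: nonempty, upward closed,
closed under `⊓`, proper (not containing `⊥`), prime. -/
def IsPrimeFilterZ {L : Type*} [DistribLattice L] [OrderBot L] (q : Set L) : Prop :=
  q.Nonempty ∧ (∀ a ∈ q, ∀ b, a ≤ b → b ∈ q) ∧ (∀ a ∈ q, ∀ b ∈ q, a ⊓ b ∈ q) ∧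
    (⊥ : L) ∉ q ∧ ∀ a b : L, a ⊔ b ∈ q → a ∈ q ∨ b ∈ q

/-- The prime filters of `L`. -/
def PrimeFilters (L : Type*) [DistribLattice L] [OrderBot L] : Type _ :=
  {q : Set L // IsPrimeFilterZ q}

/-- The prime ideals of `L`. -/
def PrimeIdeals (L : Type*) [DistribLattice L] [OrderBot L] : Type _ :=
  {p : Set L // IsPrimeIdealZ p}

/-- `D^f(a) = { q ∈ PF(L) : a ∈ q }`. -/
def Dfa {L : Type*} [DistribLattice L] [OrderBot L] (a : L) : Set (PrimeFilters L) :=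
  {q | a ∈ q.1}

/-- `D(a) = { p ∈ PI(L) : a ∉ p }`. -/
def Da {L : Type*} [DistribLattice L] [OrderBot L] (a : L) : Set (PrimeIdeals L) :=
  {p | a ∉ p.1}

section Lattice

variable {L : Type*} [DistribLattice L] [OrderBot L]

instance : TopologicalSpace (PrimeIdeals L) :=
  TopologicalSpace.generateFrom {S | ∃ a : L, S = Da a}

instance : TopologicalSpace (PrimeFilters L) :=
  TopologicalSpace.generateFrom {S | ∃ a : L, S = Dfa a}

namespace PrimeIdeals

lemma bot_mem (p : PrimeIdeals L) : (⊥ : L) ∈ p.1 := by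
  obtain ⟨x, hx⟩ := p.2.1.1
  exact p.2.1.2.1 x hx ⊥ bot_le

lemma mem_of_le (p : PrimeIdeals L) {x y : L} (hx : x ∈ p.1) (h : y ≤ x) : y ∈ p.1 :=
  p.2.1.2.1 x hx y h

lemma sup_mem (p : PrimeIdeals L) {x y : L} (hx : x ∈ p.1) (hy : y ∈ p.1) : x ⊔ y ∈ p.1 :=
  p.2.1.2.2 x hx y hy

lemma inf_mem_iff (p : PrimeIdeals L) {x y : L} : x ⊓ y ∈ p.1 ↔ x ∈ p.1 ∨ y ∈ p.1 := by
  refine ⟨p.2.2.2 x y, ?_⟩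
  rintro (h | h)
  · exact p.mem_of_le h inf_le_left
  · exact p.mem_of_le h inf_le_right

lemma sup_mem_iff (p : PrimeIdeals L) {x y : L} : x ⊔ y ∈ p.1 ↔ x ∈ p.1 ∧ y ∈ p.1 :=
  ⟨fun h => ⟨p.mem_of_le h le_sup_left, p.mem_of_le h le_sup_right⟩,
   fun ⟨h1, h2⟩ => p.sup_mem h1 h2⟩

lemma exists_not_mem (p : PrimeIdeals L) : ∃ a : L, a ∉ p.1 := by
  by_contra h
  push_neg at h
  exact p.2.2.1 (Set.eq_univ_of_forall h)

end PrimeIdeals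

lemma mem_Da {a : L} {p : PrimeIdeals L} : p ∈ Da a ↔ a ∉ p.1 := Iff.rfl

lemma Da_inter (a b : L) : Da a ∩ Da b = Da (a ⊓ b) := by
  ext p
  simp only [Da, Set.mem_inter_iff, Set.mem_setOf_eq, p.inf_mem_iff]
  tauto

lemma Da_union (a b : L) : Da a ∪ Da b = Da (a ⊔ b) := by
  ext p
  simp only [Da, Set.mem_union, Set.mem_setOf_eq, p.sup_mem_iff]
  tauto

lemma Da_bot : (Da (⊥ : L)) = (∅ : Set (PrimeIdeals L)) := by
  ext p
  simp [Da, p.bot_mem]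

lemma isOpen_Da (a : L) : IsOpen (Da a) :=
  TopologicalSpace.isOpen_generateFrom_of_mem ⟨a, rfl⟩

lemma isBasis_Da :
    IsTopologicalBasis (insert Set.univ {S | ∃ a : L, S = Da a}) := by
  refine isTopologicalBasis_of_subbasis_of_inter rfl ?_
  rintro _ ⟨a, rfl⟩ _ ⟨b, rfl⟩
  exact ⟨a ⊓ b, Da_inter a b⟩

lemma CO_eq_Da {U : Set (PrimeIdeals L)}
    (hU : U ∈ CO (PrimeIdeals L)) : ∃ a : L, U = Da a := by
  have hcover : U ⊆ ⋃ b : {b : L // Da b ⊆ U}, Da b.1 := by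
    intro p hp
    obtain ⟨V, hV, hpV, hVU⟩ := isBasis_Da.exists_subset_of_mem_open hp hU.2
    rcases hV with rfl | ⟨b, rfl⟩
    · obtain ⟨a, ha⟩ := p.exists_not_mem
      have : Da a ⊆ U := fun q _ => hVU (Set.mem_univ q)
      exact Set.mem_iUnion.mpr ⟨⟨a, this⟩, ha⟩
    · exact Set.mem_iUnion.mpr ⟨⟨b, hVU⟩, hpV⟩
  obtain ⟨t, ht⟩ := hU.1.elim_finite_subcover _ (fun (b : {b : L // Da b ⊆ U}) => isOpen_Da b.1) hcover
  have hDaSup : ∀ t : Finset {b : L // Da b ⊆ U},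
      (⋃ b ∈ t, Da b.1) = Da (t.sup fun b => b.1) := by
    intro t
    classical
    induction t using Finset.induction_on with
    | empty => simp [Da_bot]
    | insert _ _ hmem ih =>
      rw [Finset.set_biUnion_insert, ih, Finset.sup_insert, Da_union]
  refine ⟨t.sup fun b => b.1, subset_antisymm (fun p hp => ?_) ?_⟩
  · rw [← hDaSup]; exact ht hp
  · rw [← hDaSup]
    exact Set.iUnion₂_subset fun b _ => b.2

end Lattice

lemma CO_image {X Y : Type*} [TopologicalSpace X] [TopologicalSpace Y] (e : X ≃ₜ Y)
    {U : Set X} (h : U ∈ CO X) : e '' U ∈ CO Y :=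
  ⟨h.1.image e.continuous, e.isOpenMap U h.2⟩

lemma isSpectralTopSpace_of_homeomorph {X Y : Type*} [TopologicalSpace X] [TopologicalSpace Y]
    (e : X ≃ₜ Y) (h : IsSpectralTopSpace X) : IsSpectralTopSpace Y := by
  obtain ⟨h1, h2, h3, h4, h5⟩ := h
  refine ⟨e.compactSpace, e.t0Space, e.symm.isOpenEmbedding.quasiSober, ?_, ?_⟩
  · refine TopologicalSpace.isTopologicalBasis_of_isOpen_of_nhds (fun U hU => hU.2) ?_
    intro y U hy hU
    obtain ⟨W, hW, hyW, hWU⟩ := h4.exists_subset_of_mem_open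
      (show e.symm y ∈ e ⁻¹' U by simpa using hy) (hU.preimage e.continuous)
    exact ⟨e '' W, CO_image e hW, ⟨e.symm y, hyW, by simp⟩, by
      rintro _ ⟨x, hx, rfl⟩; exact hWU hx⟩
  · intro U hU V hV
    have hU' : e.symm '' U ∈ CO X := CO_image e.symm hU
    have hV' : e.symm '' V ∈ CO X := CO_image e.symm hV
    have hi := h5 _ hU' _ hV'
    have himg : e '' (e.symm '' U ∩ e.symm '' V) = U ∩ V := by
      rw [← Set.image_inter e.symm.injective]
      simp [Set.image_image]
    rw [← himg]; exact CO_image e hi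

lemma isSpectralTopSpace_primeSpectrum (R : Type*) [CommSemiring R] :
    IsSpectralTopSpace (PrimeSpectrum R) := by
  refine ⟨inferInstance, inferInstance, inferInstance, ?_, ?_⟩
  · refine TopologicalSpace.isTopologicalBasis_of_isOpen_of_nhds (fun U hU => hU.2) ?_
    intro x U hx hU
    obtain ⟨V, ⟨f, rfl⟩, hxV, hVU⟩ :=
      PrimeSpectrum.isTopologicalBasis_basic_opens.exists_subset_of_mem_open hx hU
    exact ⟨_, ⟨PrimeSpectrum.isCompact_basicOpen f, PrimeSpectrum.isOpen_basicOpen⟩, hxV, hVU⟩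
  · intro U hU V hV
    obtain ⟨I, hI, hIU⟩ := PrimeSpectrum.isCompact_isOpen_iff_ideal.mp ⟨hU.1, hU.2⟩
    obtain ⟨J, hJ, hJV⟩ := PrimeSpectrum.isCompact_isOpen_iff_ideal.mp ⟨hV.1, hV.2⟩
    have hUV : U ∩ V = (PrimeSpectrum.zeroLocus (I * J : Ideal R))ᶜ := by
      rw [PrimeSpectrum.zeroLocus_mul, Set.compl_union, hIU, hJV]
    have h := PrimeSpectrum.isCompact_isOpen_iff_ideal.mpr ⟨I * J, Submodule.FG.mul hI hJ, hUV.symm⟩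
    exact ⟨h.1, h.2⟩

section IicS

variable {L : Type*} [DistribLattice L] [OrderBot L]

/-- The interval `[⊥, a]` as a type, to be endowed with a commutative semiring
structure (`⊔` as addition, `⊓` as multiplication). -/
abbrev IicS (a : L) : Type _ := {x : L // x ≤ a}

instance (a : L) : Zero (IicS a) := ⟨⟨⊥, bot_le⟩⟩
instance (a : L) : One (IicS a) := ⟨⟨a, le_refl a⟩⟩
instance (a : L) : Add (IicS a) := ⟨fun x y => ⟨x.1 ⊔ y.1, sup_le x.2 y.2⟩⟩
instance (a : L) : Mul (IicS a) := ⟨fun x y => ⟨x.1 ⊓ y.1, le_trans inf_le_left x.2⟩⟩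

instance (a : L) : CommSemiring (IicS a) where
  add := (· + ·)
  add_assoc x y z := Subtype.ext (sup_assoc x.1 y.1 z.1)
  zero := 0
  zero_add x := Subtype.ext (bot_sup_eq x.1)
  add_zero x := Subtype.ext (sup_bot_eq x.1)
  add_comm x y := Subtype.ext (sup_comm x.1 y.1)
  mul := (· * ·)
  mul_assoc x y z := Subtype.ext (inf_assoc x.1 y.1 z.1)
  one := 1
  one_mul x := Subtype.ext (inf_eq_right.mpr x.2)
  mul_one x := Subtype.ext (inf_eq_left.mpr x.2)
  left_distrib x y z := Subtype.ext (inf_sup_left x.1 y.1 z.1)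
  right_distrib x y z := Subtype.ext (inf_sup_right x.1 y.1 z.1)
  zero_mul x := Subtype.ext (bot_inf_eq x.1)
  mul_zero x := Subtype.ext (inf_bot_eq x.1)
  mul_comm x y := Subtype.ext (inf_comm x.1 y.1)
  nsmul := nsmulRec
  npow := npowRec

lemma IicS.mul_val {a : L} (x y : IicS a) : (x * y).1 = x.1 ⊓ y.1 := rfl
lemma IicS.add_val {a : L} (x y : IicS a) : (x + y).1 = x.1 ⊔ y.1 := rfl
lemma IicS.one_val {a : L} : (1 : IicS a).1 = a := rfl
lemma IicS.zero_val {a : L} : (0 : IicS a).1 = ⊥ := rfl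

/-- The ideal of `IicS a` associated to a prime ideal of `L` not containing `a`. -/
def DaToSpec {a : L} (p : ↥(Da a : Set (PrimeIdeals L))) : PrimeSpectrum (IicS a) := by
  refine ⟨{ carrier := {x : IicS a | x.1 ∈ p.1.1},
            add_mem' := ?_, zero_mem' := ?_, smul_mem' := ?_ }, ?_, ?_⟩
  · intro x y hx hy
    exact p.1.sup_mem hx hy
  · exact p.1.bot_mem
  · intro c x hx
    exact p.1.mem_of_le hx inf_le_right
  · rw [Ideal.ne_top_iff_one]
    exact p.2
  · intro x y hxy
    exact p.1.2.2.2 x.1 y.1 hxy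

/-- The prime ideal of `L` associated to a point of `PrimeSpectrum (IicS a)`. -/
def SpecToDa {a : L} (q : PrimeSpectrum (IicS a)) : ↥(Da a : Set (PrimeIdeals L)) := by
  refine ⟨⟨{x : L | (⟨x ⊓ a, inf_le_right⟩ : IicS a) ∈ q.asIdeal}, ⟨⟨?_, ?_, ?_⟩, ?_, ?_⟩⟩, ?_⟩
  · refine ⟨⊥, ?_⟩
    have h : (⟨⊥ ⊓ a, inf_le_right⟩ : IicS a) = 0 := Subtype.ext (bot_inf_eq a)
    rw [Set.mem_setOf_eq, h]
    exact q.asIdeal.zero_mem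
  · intro x hx b hb
    have h : (⟨b ⊓ a, inf_le_right⟩ : IicS a) =
        (⟨x ⊓ a, inf_le_right⟩ : IicS a) * ⟨b ⊓ a, inf_le_right⟩ :=
      Subtype.ext (inf_eq_right.mpr (inf_le_inf_right a hb)).symm
    rw [Set.mem_setOf_eq, h]
    exact Ideal.mul_mem_right _ _ hx
  · intro x hx y hy
    have h : (⟨(x ⊔ y) ⊓ a, inf_le_right⟩ : IicS a) =
        (⟨x ⊓ a, inf_le_right⟩ : IicS a) + ⟨y ⊓ a, inf_le_right⟩ :=
      Subtype.ext (inf_sup_right x y a)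
    rw [Set.mem_setOf_eq, h]
    exact Ideal.add_mem _ hx hy
  · intro h
    have ha : a ∈ {x : L | (⟨x ⊓ a, inf_le_right⟩ : IicS a) ∈ q.asIdeal} := h ▸ Set.mem_univ a
    have h1 : (⟨a ⊓ a, inf_le_right⟩ : IicS a) = 1 := Subtype.ext (inf_idem a)
    rw [Set.mem_setOf_eq, h1] at ha
    exact q.isPrime.ne_top (Ideal.eq_top_iff_one _ |>.mpr ha)
  · intro x y hxy
    rw [Set.mem_setOf_eq] at hxy
    have h : (⟨x ⊓ y ⊓ a, inf_le_right⟩ : IicS a) =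
        (⟨x ⊓ a, inf_le_right⟩ : IicS a) * ⟨y ⊓ a, inf_le_right⟩ :=
      Subtype.ext (inf_inf_distrib_right x y a)
    rw [h] at hxy
    exact q.isPrime.mem_or_mem hxy
  · intro ha
    rw [Set.mem_setOf_eq] at ha
    have h1 : (⟨a ⊓ a, inf_le_right⟩ : IicS a) = 1 := Subtype.ext (inf_idem a)
    rw [h1] at ha
    exact q.isPrime.ne_top (Ideal.eq_top_iff_one _ |>.mpr ha)

/-- The equivalence between `Da a` and `PrimeSpectrum (IicS a)`. -/
def DaEquiv (a : L) : ↥(Da a : Set (PrimeIdeals L)) ≃ PrimeSpectrum (IicS a) where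
  toFun := DaToSpec
  invFun := SpecToDa
  left_inv p := by
    apply Subtype.ext
    apply Subtype.ext
    ext x
    show x ⊓ a ∈ p.1.1 ↔ x ∈ p.1.1
    constructor
    · intro h
      rcases p.1.inf_mem_iff.mp h with h | h
      · exact h
      · exact absurd h p.2
    · intro h
      exact p.1.mem_of_le h inf_le_left
  right_inv q := by
    apply PrimeSpectrum.ext
    apply Ideal.ext
    intro x
    show (⟨x.1 ⊓ a, inf_le_right⟩ : IicS a) ∈ q.asIdeal ↔ x ∈ q.asIdeal
    have h : (⟨x.1 ⊓ a, inf_le_right⟩ : IicS a) = x := Subtype.ext (inf_eq_left.mpr x.2)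
    rw [h]

/-- `DaEquiv` as a homeomorphism. -/
def DaHomeo (a : L) : ↥(Da a : Set (PrimeIdeals L)) ≃ₜ PrimeSpectrum (IicS a) where
  toEquiv := DaEquiv a
  continuous_toFun := by
    refine PrimeSpectrum.isTopologicalBasis_basic_opens.continuous_iff.mpr ?_
    rintro _ ⟨f, rfl⟩
    show IsOpen (⇑(DaEquiv a) ⁻¹' (PrimeSpectrum.basicOpen f : Set (PrimeSpectrum (IicS a))))
    have h : ⇑(DaEquiv a) ⁻¹' (PrimeSpectrum.basicOpen f : Set (PrimeSpectrum (IicS a))) =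
        Subtype.val ⁻¹' (Da f.1) := by
      ext p
      rfl
    rw [h]
    exact (isOpen_Da f.1).preimage continuous_subtype_val
  continuous_invFun := by
    apply continuous_induced_rng.mpr
    refine continuous_generateFrom_iff.mpr ?_
    rintro _ ⟨b, rfl⟩
    show IsOpen (Subtype.val ∘ (DaEquiv a).invFun ⁻¹' Da b)
    have h : Subtype.val ∘ (DaEquiv a).invFun ⁻¹' (Da b) =
        (PrimeSpectrum.basicOpen (⟨b ⊓ a, inf_le_right⟩ : IicS a) : Set (PrimeSpectrum (IicS a))) := by
      ext q
      rfl
    rw [h]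
    exact PrimeSpectrum.isOpen_basicOpen

end IicS

section Main

variable {L : Type*} [DistribLattice L] [OrderBot L]

lemma isSpectral_Da (a : L) : IsSpectralTopSpace ↥(Da a : Set (PrimeIdeals L)) :=
  isSpectralTopSpace_of_homeomorph (DaHomeo a).symm (isSpectralTopSpace_primeSpectrum (IicS a))

lemma isCompact_Da (a : L) : IsCompact (Da a : Set (PrimeIdeals L)) := by
  rw [isCompact_iff_compactSpace]
  exact (DaHomeo a).symm.compactSpace

theorem PI_sls : StronglyLocallySpectral (PrimeIdeals L) := by
  constructor
  · apply Set.eq_univ_of_forall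
    intro p
    obtain ⟨a, ha⟩ := p.exists_not_mem
    exact ⟨Da a, ⟨isOpen_Da a, isSpectral_Da a⟩, ha⟩
  · intro U hU V hV
    obtain ⟨a, rfl⟩ := CO_eq_Da hU
    obtain ⟨b, rfl⟩ := CO_eq_Da hV
    rw [Da_inter]
    exact isCompact_Da (a ⊓ b)

/-- Complementation, from prime filters to prime ideals. -/
def complEquiv : PrimeFilters L ≃ PrimeIdeals L where
  toFun q := ⟨q.1ᶜ, by
    obtain ⟨⟨x, hx⟩, hup, hinf, hbot, hprime⟩ := q.2
    refine ⟨⟨⟨⊥, hbot⟩, ?_, ?_⟩, ?_, ?_⟩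
    · intro u hu v hv hvq
      exact hu (hup v hvq u hv)
    · intro u hu v hv huv
      rcases hprime u v huv with h | h
      · exact hu h
      · exact hv h
    · intro h
      exact (h ▸ Set.mem_univ x : x ∈ q.1ᶜ) hx
    · intro u v huv
      by_contra h
      push_neg at h
      obtain ⟨hu, hv⟩ := h
      rw [Set.notMem_compl_iff] at hu hv
      exact huv (hinf u hu v hv)⟩
  invFun p := ⟨p.1ᶜ, by
    obtain ⟨⟨⟨x, hx⟩, hdown, hsup⟩, hproper, hprime⟩ := p.2
    have hbot : (⊥ : L) ∈ p.1 := hdown x hx ⊥ bot_le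
    refine ⟨?_, ?_, ?_, fun h => h hbot, ?_⟩
    · by_contra h
      rw [Set.not_nonempty_iff_eq_empty, ← Set.compl_univ, compl_inj_iff] at h
      exact hproper h
    · intro u hu v huv hv
      exact hu (hdown v hv u huv)
    · intro u hu v hv huv
      rcases hprime u v huv with h | h
      · exact hu h
      · exact hv h
    · intro u v huv
      by_contra h
      push_neg at h
      obtain ⟨hu, hv⟩ := h
      rw [Set.notMem_compl_iff] at hu hv
      exact huv (hsup u hu v hv)⟩
  left_inv q := Subtype.ext (compl_compl q.1)
  right_inv p := Subtype.ext (compl_compl p.1)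

/-- Complementation as a homeomorphism. -/
def complHomeo : PrimeFilters L ≃ₜ PrimeIdeals L where
  toEquiv := complEquiv
  continuous_toFun := by
    refine continuous_generateFrom_iff.mpr ?_
    rintro _ ⟨a, rfl⟩
    have h : (complEquiv (L := L)).toFun ⁻¹' (Da a) = Dfa a := by
      ext q
      show a ∉ (q.1)ᶜ ↔ a ∈ q.1
      simp
    rw [h]
    exact TopologicalSpace.isOpen_generateFrom_of_mem ⟨a, rfl⟩
  continuous_invFun := by
    refine continuous_generateFrom_iff.mpr ?_
    rintro _ ⟨a, rfl⟩
    have h : (complEquiv (L := L)).invFun ⁻¹' (Dfa a) = Da a := by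
      ext p
      show a ∈ (p.1)ᶜ ↔ a ∉ p.1
      rfl
    rw [h]
    exact TopologicalSpace.isOpen_generateFrom_of_mem ⟨a, rfl⟩

lemma stronglyLocallySpectral_of_homeomorph {X Y : Type*} [TopologicalSpace X]
    [TopologicalSpace Y] (e : X ≃ₜ Y) (h : StronglyLocallySpectral X) :
    StronglyLocallySpectral Y := by
  constructor
  · apply Set.eq_univ_of_forall
    intro y
    have : e.symm y ∈ ⋃₀ SO X := h.1 ▸ Set.mem_univ _
    obtain ⟨U, ⟨hUo, hUs⟩, hyU⟩ := this
    refine ⟨e '' U, ⟨e.isOpenMap U hUo, ?_⟩, ⟨e.symm y, hyU, by simp⟩⟩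
    exact isSpectralTopSpace_of_homeomorph (e.image U) hUs
  · intro U hU V hV
    have hU' : e.symm '' U ∈ CO X := CO_image e.symm hU
    have hV' : e.symm '' V ∈ CO X := CO_image e.symm hV
    have hi := h.2 _ hU' _ hV'
    have himg : e '' (e.symm '' U ∩ e.symm '' V) = U ∩ V := by
      rw [← Set.image_inter e.symm.injective]
      simp [Set.image_image]
    rw [← himg]
    exact hi.image e.continuous

end Main


/-- STATEMENT 16: For a distributive lattice `L` with zero, the prime filter space
`PF(L)` with the topology generated by the sets `D^f(a)`, and the prime ideal space
`PI(L)` with the topology generated by the sets `D(a)`, are strongly locally spectral. -/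
theorem primeFilters_primeIdeals_sls {L : Type*} [DistribLattice L] [OrderBot L] :
    @StronglyLocallySpectral (PrimeFilters L)
        (TopologicalSpace.generateFrom {S | ∃ a : L, S = Dfa a}) ∧
      @StronglyLocallySpectral (PrimeIdeals L)
        (TopologicalSpace.generateFrom {S | ∃ a : L, S = Da a}) := by
  exact ⟨stronglyLocallySpectral_of_homeomorph complHomeo.symm PI_sls, PI_sls⟩
end
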